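/- arXiv:2105.00276 — 5 statements merged into one kernel-verified Lean document; each statement's English description precedes it below -/
import Mathlib

section
/- Sokhotski–Plemelj formula: For every Schwartz function φ : ℝ → ℂ and each choice of sign σ ∈ {+1, −1}, the limit lim_{ε→0⁺} ∫_ℝ φ(x)/(ε + σ·i·x) dx exists and equals π·φ(0) − σ·i·lim_{ε→0⁺} ∫_{|x|>ε} φ(x)/x dx (in particular the principal-value limit on the right exists). -/
open MeasureTheory Filter Real
set_option maxHeartbeats 1600000

lemma odd_integral_zero {f : ℝ → ℂ} (hodd : ∀ x, f (-x) = -f x) : ∫ x : ℝ, f x = 0 := by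
  have h1 : ∫ x : ℝ, f (-x) = ∫ x, f x := integral_neg_eq_self f volume
  have h2 : ∫ x : ℝ, f (-x) = -∫ x, f x := by
    simp_rw [hodd]; exact integral_neg f
  have h3 : ∫ x : ℝ, f x = -∫ x, f x := h1.symm.trans h2
  have : (2 : ℂ) * ∫ x : ℝ, f x = 0 := by linear_combination h3
  simpa using this

lemma schwartz_lip (φ : SchwartzMap ℝ ℂ) : ∃ C, 0 < C ∧ ∀ x : ℝ, ‖φ x - φ 0‖ ≤ C * |x| := by
  obtain ⟨C, hC0, hC⟩ := φ.decay 0 1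
  refine ⟨C, hC0, fun x => ?_⟩
  have hb : ∀ y : ℝ, ‖fderiv ℝ φ y‖ ≤ C := by
    intro y
    apply ContinuousLinearMap.opNorm_le_bound _ hC0.le
    intro v
    have h1 : fderiv ℝ φ y v = iteratedFDeriv ℝ 1 (⇑φ) y (fun _ => v) := by
      rw [iteratedFDeriv_one_apply]
    rw [h1]
    calc ‖iteratedFDeriv ℝ 1 (⇑φ) y (fun _ => v)‖
        ≤ ‖iteratedFDeriv ℝ 1 (⇑φ) y‖ * ∏ _i : Fin 1, ‖v‖ :=
          ContinuousMultilinearMap.le_opNorm _ _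
      _ ≤ C * ‖v‖ := by
          simp only [Finset.prod_const, Finset.card_univ, Fintype.card_fin, pow_one]
          have := hC y; simp only [pow_zero, one_mul] at this
          exact mul_le_mul_of_nonneg_right this (norm_nonneg v)
  have := Convex.norm_image_sub_le_of_norm_fderiv_le (𝕜 := ℝ) (s := Set.univ)
    (fun y _ => (φ.differentiable).differentiableAt) (fun y _ => hb y) convex_univ
    (Set.mem_univ 0) (Set.mem_univ x)
  simpa using this

lemma schwartz_bdd (φ : SchwartzMap ℝ ℂ) : ∃ M, 0 < M ∧ ∀ x : ℝ, ‖φ x‖ ≤ M := by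
  obtain ⟨M, hM0, hM⟩ := φ.decay 0 0
  refine ⟨M, hM0, fun x => ?_⟩
  have := hM x
  simpa [norm_iteratedFDeriv_zero] using this

/-- Sokhotski–Plemelj formula: for every Schwartz function `φ` and each sign `σ ∈ {1, -1}`,
the limit `lim_{ε→0⁺} ∫ φ(x)/(ε + σ·i·x) dx` exists and equals
`π·φ(0) − σ·i·Vp(1/x)[φ]`, the principal-value limit existing as well. -/
theorem sokhotski_plemelj (φ : SchwartzMap ℝ ℂ) (σ : ℝ) (hσ : σ = 1 ∨ σ = -1) :
    ∃ pv : ℂ,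
      Tendsto (fun ε : ℝ => ∫ x in {x : ℝ | ε < |x|}, φ x / (x : ℂ))
        (nhdsWithin 0 (Set.Ioi 0)) (nhds pv) ∧
      Tendsto (fun ε : ℝ => ∫ x : ℝ, φ x / ((ε : ℂ) + (σ : ℂ) * Complex.I * (x : ℂ)))
        (nhdsWithin 0 (Set.Ioi 0))
        (nhds ((π : ℂ) * φ 0 - (σ : ℂ) * Complex.I * pv)) := by
  classical
  set l : Filter ℝ := nhdsWithin 0 (Set.Ioi 0) with hl
  set K : Set ℝ := Set.Icc (-1 : ℝ) 1 with hK
  have hKmeas : MeasurableSet K := measurableSet_Icc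
  have hKsymm : ∀ x : ℝ, -x ∈ K ↔ x ∈ K := by
    intro x
    simp only [hK, Set.mem_Icc]
    constructor <;> intro h <;> constructor <;> linarith [h.1, h.2]
  set F : ℝ → ℂ := fun x => (φ x - K.indicator (fun _ => φ 0) x) / (x : ℂ) with hFdef
  have hFmeas : AEStronglyMeasurable F volume := by
    apply Measurable.aestronglyMeasurable
    exact ((φ.continuous.measurable).sub (measurable_const.indicator hKmeas)).div
      Complex.measurable_ofReal
  obtain ⟨C, hC0, hC⟩ := schwartz_lip φ
  obtain ⟨M, hM0, hM⟩ := schwartz_bdd φ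
  have hφint : Integrable (fun x : ℝ => φ x) volume := φ.integrable
  set bndF : ℝ → ℝ := fun x => K.indicator (fun _ => C) x + ‖φ x‖ with hbndF
  have hbndF_int : Integrable bndF := by
    apply Integrable.add _ hφint.norm
    rw [integrable_indicator_iff hKmeas]
    exact integrableOn_const (measure_Icc_lt_top.ne)
  have hFle : ∀ x : ℝ, ‖F x‖ ≤ bndF x := by
    intro x
    have hnx : ‖(x:ℂ)‖ = |x| := by rw [Complex.norm_real, Real.norm_eq_abs]
    by_cases hxK : x ∈ K
    · rw [hbndF]
      simp only [Set.indicator_of_mem hxK]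
      rcases eq_or_ne x 0 with rfl | hx0
      · simp only [hFdef, Complex.ofReal_zero, div_zero, norm_zero]
        positivity
      · have h1 : ‖F x‖ = ‖φ x - φ 0‖ / |x| := by
          rw [hFdef]
          simp only [Set.indicator_of_mem hxK]
          rw [norm_div, hnx]
        rw [h1]
        have h2 : ‖φ x - φ 0‖ / |x| ≤ C := by
          rw [div_le_iff₀ (abs_pos.2 hx0)]
          exact hC x
        have : (0:ℝ) ≤ ‖φ x‖ := norm_nonneg _
        linarith
    · rw [hbndF]
      simp only [Set.indicator_of_notMem hxK]
      have hx1 : 1 < |x| := by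
        by_contra h
        exact hxK (abs_le.1 (not_lt.1 h))
      have h1 : ‖F x‖ = ‖φ x‖ / |x| := by
        rw [hFdef]
        simp only [Set.indicator_of_notMem hxK, sub_zero]
        rw [norm_div, hnx]
      rw [h1]
      have := div_le_self (norm_nonneg (φ x)) hx1.le
      linarith
  have hFint : Integrable F := hbndF_int.mono' hFmeas (ae_of_all _ hFle)
  have hSmeas : ∀ ε : ℝ, MeasurableSet {x : ℝ | ε < |x|} := fun ε =>
    measurableSet_lt measurable_const measurable_id.abs
  have hae0 : ∀ᵐ x : ℝ, x ≠ 0 := by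
    rw [ae_iff]
    simp only [ne_eq, not_not, Set.setOf_eq_eq_singleton]
    exact measure_singleton 0
  refine ⟨∫ x, F x, ?_, ?_⟩
  · -- principal value part
    have key : ∀ ε : ℝ, 0 < ε →
        (∫ x in {x : ℝ | ε < |x|}, φ x / (x:ℂ)) = ∫ x, ({x : ℝ | ε < |x|}).indicator F x := by
      intro ε hε
      set S : Set ℝ := {x : ℝ | ε < |x|} with hS
      set G : ℝ → ℂ := fun x => (S ∩ K).indicator (fun x => (φ 0 : ℂ) / (x:ℂ)) x with hG
      have hSKmeas : MeasurableSet (S ∩ K) := (hSmeas ε).inter hKmeas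
      have hGint : Integrable G := by
        rw [hG, integrable_indicator_iff hSKmeas]
        apply Measure.integrableOn_of_bounded (M := ‖φ 0‖ / ε)
        · exact ne_of_lt (lt_of_le_of_lt (measure_mono Set.inter_subset_right) measure_Icc_lt_top)
        · exact (measurable_const.div Complex.measurable_ofReal).aestronglyMeasurable
        · filter_upwards [ae_restrict_mem hSKmeas] with x hx
          have hx1 : ε < |x| := hx.1
          rw [norm_div, Complex.norm_real, Real.norm_eq_abs]
          exact div_le_div_of_nonneg_left (norm_nonneg _) hε hx1.le
      have hGzero : ∫ x, G x = 0 := by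
        apply odd_integral_zero
        intro x
        show (S ∩ K).indicator (fun x => (φ 0 : ℂ) / (x:ℂ)) (-x)
          = -(S ∩ K).indicator (fun x => (φ 0 : ℂ) / (x:ℂ)) x
        by_cases hx : x ∈ S ∩ K
        · have hx' : -x ∈ S ∩ K := by
            refine ⟨?_, (hKsymm x).2 hx.2⟩
            simpa [hS, abs_neg] using hx.1
          rw [Set.indicator_of_mem hx', Set.indicator_of_mem hx]
          push_cast
          rw [div_neg]
        · have hx' : -x ∉ S ∩ K := by
            intro h
            apply hx
            refine ⟨?_, (hKsymm x).1 (by simpa using h.2)⟩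
            simpa [hS, abs_neg] using h.1
          rw [Set.indicator_of_notMem hx', Set.indicator_of_notMem hx, neg_zero]
      rw [← integral_indicator (hSmeas ε)]
      have hGmem : ∀ y : ℝ, y ∈ S ∩ K → G y = (φ 0 : ℂ) / (y:ℂ) := by
        intro y hy
        show (S ∩ K).indicator (fun x => (φ 0 : ℂ) / (x:ℂ)) y = _
        rw [Set.indicator_of_mem hy]
      have hGnot : ∀ y : ℝ, y ∉ S ∩ K → G y = 0 := by
        intro y hy
        show (S ∩ K).indicator (fun x => (φ 0 : ℂ) / (x:ℂ)) y = _
        rw [Set.indicator_of_notMem hy]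
      have hpt : ∀ x : ℝ, S.indicator (fun x => φ x / (x:ℂ)) x = S.indicator F x + G x := by
        intro x
        by_cases hx : x ∈ S
        · rw [Set.indicator_of_mem hx, Set.indicator_of_mem hx]
          have hx0 : x ≠ 0 := by
            intro h
            rw [h] at hx
            simp only [hS, Set.mem_setOf_eq, abs_zero] at hx
            linarith
          have hx0' : (x:ℂ) ≠ 0 := by exact_mod_cast hx0
          by_cases hxK : x ∈ K
          · rw [hGmem x ⟨hx, hxK⟩, hFdef]
            simp only [Set.indicator_of_mem hxK]
            rw [← add_div, sub_add_cancel]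
          · rw [hGnot x (fun h => hxK h.2), hFdef]
            simp only [Set.indicator_of_notMem hxK, sub_zero, add_zero]
        · rw [Set.indicator_of_notMem hx, Set.indicator_of_notMem hx,
            hGnot x (fun h => hx h.1), add_zero]
      simp_rw [← hS, hpt]
      rw [integral_add (hFint.indicator (hSmeas ε)) hGint, hGzero, add_zero]
    have hdct : Tendsto (fun ε : ℝ => ∫ x, ({x : ℝ | ε < |x|}).indicator F x) l
        (nhds (∫ x, F x)) := by
      apply tendsto_integral_filter_of_dominated_convergence (bound := fun x => ‖F x‖)
      · filter_upwards with ε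
        exact hFmeas.indicator (hSmeas ε)
      · filter_upwards with ε
        exact ae_of_all _ fun x => norm_indicator_le_norm_self F x
      · exact hFint.norm
      · filter_upwards [hae0] with x hx
        apply Tendsto.congr' _ tendsto_const_nhds
        have hmem : {ε : ℝ | ε < |x|} ∈ l := by
          rw [hl]
          exact nhdsWithin_le_nhds (gt_mem_nhds (abs_pos.2 hx))
        filter_upwards [hmem] with ε hε
        exact (Set.indicator_of_mem (show x ∈ {x : ℝ | ε < |x|} from hε) F).symm
    apply hdct.congr'
    filter_upwards [self_mem_nhdsWithin] with ε (hε : ε ∈ Set.Ioi 0)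
    exact (key ε hε).symm
  · -- Sokhotski–Plemelj part
    have hσ2 : (σ : ℂ) * (σ : ℂ) = 1 := by rcases hσ with h | h <;> rw [h] <;> norm_num
    set A : ℝ → ℂ := fun ε => ∫ x : ℝ, φ x * ((ε / (ε^2 + x^2) : ℝ) : ℂ) with hA
    set B : ℝ → ℂ := fun ε => ∫ x : ℝ, φ x * ((x / (ε^2 + x^2) : ℝ) : ℂ) with hB
    have hA_int : ∀ ε : ℝ, 0 < ε →
        Integrable (fun x : ℝ => φ x * ((ε / (ε^2 + x^2) : ℝ) : ℂ)) := by
      intro ε hε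
      apply (hφint.bdd_mul (Complex.measurable_ofReal.comp
        (by fun_prop : Measurable fun x : ℝ => ε / (ε^2 + x^2))).aestronglyMeasurable
        (c := 1/ε) (ae_of_all _ fun x => ?_)).congr
      · exact ae_of_all _ fun x => mul_comm _ _
      · simp only [Function.comp_apply]
        rw [Complex.norm_real, Real.norm_eq_abs, abs_of_nonneg (by positivity)]
        rw [div_le_div_iff₀ (by positivity) hε]
        nlinarith [sq_nonneg x]
    have hB_int : ∀ ε : ℝ, 0 < ε →
        Integrable (fun x : ℝ => φ x * ((x / (ε^2 + x^2) : ℝ) : ℂ)) := by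
      intro ε hε
      apply (hφint.bdd_mul (Complex.measurable_ofReal.comp
        (by fun_prop : Measurable fun x : ℝ => x / (ε^2 + x^2))).aestronglyMeasurable
        (c := 1/(2*ε)) (ae_of_all _ fun x => ?_)).congr
      · exact ae_of_all _ fun x => mul_comm _ _
      · simp only [Function.comp_apply]
        rw [Complex.norm_real, Real.norm_eq_abs, abs_div,
          abs_of_nonneg (show (0:ℝ) ≤ ε^2 + x^2 by positivity)]
        rw [div_le_div_iff₀ (by positivity) (by positivity)]
        nlinarith [sq_nonneg (ε - |x|), sq_abs x, abs_nonneg x]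
    have hsplit : ∀ᶠ (ε : ℝ) in l,
        (∫ x : ℝ, φ x / ((ε : ℂ) + (σ : ℂ) * Complex.I * (x : ℂ)))
          = A ε - (σ:ℂ) * Complex.I * B ε := by
      filter_upwards [self_mem_nhdsWithin] with ε (hε : ε ∈ Set.Ioi 0)
      have hε : (0:ℝ) < ε := hε
      have hpt : ∀ x : ℝ, (φ x : ℂ) / ((ε:ℂ) + (σ:ℂ) * Complex.I * (x:ℂ))
          = φ x * ((ε / (ε^2 + x^2) : ℝ) : ℂ)
            - (σ:ℂ) * Complex.I * (φ x * ((x / (ε^2 + x^2) : ℝ) : ℂ)) := by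
        intro x
        have hne : ((ε:ℂ) + (σ:ℂ) * Complex.I * (x:ℂ)) ≠ 0 := by
          intro h
          have := congrArg Complex.re h
          simp [Complex.add_re, Complex.mul_re, Complex.I_re, Complex.I_im] at this
          linarith
        have hd : (ε:ℝ)^2 + x^2 ≠ 0 := by positivity
        have hd' : ((ε:ℂ)^2 + (x:ℂ)^2) ≠ 0 := by
          have h2 : ((ε:ℂ)^2 + (x:ℂ)^2) = (((ε^2 + x^2 : ℝ)) : ℂ) := by push_cast; ring
          rw [h2]
          exact_mod_cast hd
        rw [div_eq_iff hne]
        push_cast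
        field_simp
        linear_combination (φ x * (x:ℂ)^2 * Complex.I^2) * hσ2 + (φ x * (x:ℂ)^2) * Complex.I_sq
      simp_rw [hpt]
      rw [integral_sub (hA_int ε hε) ((hB_int ε hε).const_mul _), integral_const_mul]
    -- limit of A
    have hAeq : ∀ᶠ ε in l, A ε = ∫ u : ℝ, φ (ε * u) * (((1 + u^2)⁻¹ : ℝ) : ℂ) := by
      filter_upwards [self_mem_nhdsWithin] with ε (hε : ε ∈ Set.Ioi 0)
      have hε : (0:ℝ) < ε := hε
      have hcomp := Measure.integral_comp_mul_left
        (fun x : ℝ => φ x * ((ε / (ε^2 + x^2) : ℝ) : ℂ)) ε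
      have h2 : A ε = ε • ∫ x : ℝ, φ (ε * x) * ((ε / (ε^2 + (ε*x)^2) : ℝ) : ℂ) := by
        have hc := hcomp
        rw [hc, smul_smul, abs_inv, abs_of_pos hε, mul_inv_cancel₀ hε.ne', one_smul]
      rw [h2, ← integral_smul]
      apply integral_congr_ae
      apply ae_of_all
      intro u
      show ε • (φ (ε * u) * ((ε / (ε^2 + (ε*u)^2) : ℝ) : ℂ)) = φ (ε * u) * (((1 + u^2)⁻¹ : ℝ) : ℂ)
      have hd : (ε^2 + (ε*u)^2 : ℝ) ≠ 0 := by positivity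
      have hreal : ε * (ε / (ε^2 + (ε*u)^2)) = (1 + u^2)⁻¹ := by
        field_simp
      rw [Complex.real_smul, ← hreal]
      push_cast
      ring
    have hAdct : Tendsto (fun ε : ℝ => ∫ u : ℝ, φ (ε * u) * (((1 + u^2)⁻¹ : ℝ) : ℂ)) l
        (nhds (∫ u : ℝ, φ 0 * (((1 + u^2)⁻¹ : ℝ) : ℂ))) := by
      apply tendsto_integral_filter_of_dominated_convergence
        (bound := fun u => M * (1 + u^2)⁻¹)
      · filter_upwards with ε
        exact ((φ.continuous.comp (continuous_const.mul continuous_id)).mul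
          (Complex.continuous_ofReal.comp
            (((continuous_const (y := (1:ℝ))).add (continuous_pow 2)).inv₀ (fun x => by simp only [Pi.add_apply]; positivity)))).aestronglyMeasurable
      · filter_upwards with ε
        apply ae_of_all
        intro u
        rw [norm_mul, Complex.norm_real, Real.norm_eq_abs, abs_of_pos (by positivity)]
        exact mul_le_mul_of_nonneg_right (hM _) (by positivity)
      · exact integrable_inv_one_add_sq.const_mul M
      · apply ae_of_all
        intro u
        have h1 : Tendsto (fun ε : ℝ => ε * u) l (nhds 0) := by
          have h2 : Tendsto (fun ε : ℝ => ε * u) (nhds 0) (nhds (0 * u)) :=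
            (continuous_id.mul continuous_const).tendsto 0
          rw [zero_mul] at h2
          exact h2.mono_left nhdsWithin_le_nhds
        exact ((φ.continuous.tendsto 0).comp h1).mul_const _
    have hAval : (∫ u : ℝ, φ 0 * (((1 + u^2)⁻¹ : ℝ) : ℂ)) = (π : ℂ) * φ 0 := by
      have h := ContinuousLinearMap.integral_comp_comm (μ := volume) Complex.ofRealCLM
        integrable_inv_one_add_sq
      rw [integral_const_mul]
      simp only [Complex.ofRealCLM_apply] at h
      rw [h, integral_univ_inv_one_add_sq]
      ring
    have hAlim : Tendsto A l (nhds ((π:ℂ) * φ 0)) := by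
      rw [← hAval]
      exact Tendsto.congr' (by filter_upwards [hAeq] with ε h; exact h.symm) hAdct
    -- limit of B
    have hBeq : ∀ᶠ ε in l, B ε = ∫ x : ℝ, (x^2/(ε^2+x^2) : ℝ) • F x := by
      filter_upwards [self_mem_nhdsWithin] with ε (hε : ε ∈ Set.Ioi 0)
      have hε : (0:ℝ) < ε := hε
      have hpt : ∀ x : ℝ, φ x * ((x / (ε^2 + x^2) : ℝ) : ℂ)
          = (x^2/(ε^2+x^2) : ℝ) • F x
            + K.indicator (fun x => (φ 0 : ℂ) * ((x / (ε^2+x^2) : ℝ) : ℂ)) x := by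
        intro x
        have hd : (ε^2 + x^2 : ℝ) ≠ 0 := by positivity
        by_cases hxK : x ∈ K
        · rw [Set.indicator_of_mem hxK, hFdef]
          simp only [Set.indicator_of_mem hxK]
          rcases eq_or_ne x 0 with rfl | hx0
          · simp
          · have hx0' : (x:ℂ) ≠ 0 := by exact_mod_cast hx0
            have hd' : ((ε:ℂ)^2 + (x:ℂ)^2) ≠ 0 := by
              have h2 : ((ε:ℂ)^2 + (x:ℂ)^2) = (((ε^2 + x^2 : ℝ)) : ℂ) := by push_cast; ring
              rw [h2]; exact_mod_cast hd
            rw [Complex.real_smul]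
            push_cast
            field_simp
            ring
        · rw [Set.indicator_of_notMem hxK, hFdef]
          simp only [Set.indicator_of_notMem hxK, sub_zero, add_zero]
          have hx0 : x ≠ 0 := by
            intro h
            exact hxK (by rw [h]; exact ⟨by norm_num, by norm_num⟩)
          have hx0' : (x:ℂ) ≠ 0 := by exact_mod_cast hx0
          have hd' : ((ε:ℂ)^2 + (x:ℂ)^2) ≠ 0 := by
            have h2 : ((ε:ℂ)^2 + (x:ℂ)^2) = (((ε^2 + x^2 : ℝ)) : ℂ) := by push_cast; ring
            rw [h2]; exact_mod_cast hd
          rw [Complex.real_smul]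
          push_cast
          field_simp
      have hcont2 : Continuous fun x : ℝ => (x^2/(ε^2+x^2) : ℝ) :=
        (continuous_pow 2).div (continuous_const.add (continuous_pow 2)) (fun x => by positivity)
      have hmeas1 : AEStronglyMeasurable (fun x : ℝ => (x^2/(ε^2+x^2) : ℝ) • F x) volume :=
        hcont2.aestronglyMeasurable.smul hFmeas
      have hint1 : Integrable (fun x : ℝ => (x^2/(ε^2+x^2) : ℝ) • F x) := by
        apply hFint.norm.mono' hmeas1
        apply ae_of_all
        intro x
        rw [norm_smul, Real.norm_eq_abs, abs_of_nonneg (by positivity)]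
        have h1 : x^2/(ε^2+x^2) ≤ 1 := by
          rw [div_le_one (by positivity)]
          exact le_add_of_nonneg_left (sq_nonneg ε)
        exact mul_le_of_le_one_left (norm_nonneg _) h1
      have hint2 : Integrable
          (fun x : ℝ => K.indicator (fun x => (φ 0 : ℂ) * ((x / (ε^2+x^2) : ℝ) : ℂ)) x) := by
        rw [integrable_indicator_iff hKmeas]
        apply Measure.integrableOn_of_bounded (M := ‖φ 0‖ * (1/(2*ε)))
        · exact ne_of_lt measure_Icc_lt_top
        · exact (measurable_const.mul (Complex.measurable_ofReal.comp
            (by fun_prop : Measurable fun x : ℝ => x / (ε^2+x^2)))).aestronglyMeasurable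
        · apply ae_of_all
          intro x
          rw [norm_mul, Complex.norm_real, Real.norm_eq_abs, abs_div,
            abs_of_nonneg (by positivity : (0:ℝ) ≤ ε^2+x^2)]
          apply mul_le_mul_of_nonneg_left _ (norm_nonneg _)
          rw [div_le_div_iff₀ (by positivity) (by positivity)]
          nlinarith [sq_nonneg (ε - |x|), sq_abs x]
      have hodd : (∫ x : ℝ, K.indicator (fun x => (φ 0 : ℂ) * ((x / (ε^2+x^2) : ℝ) : ℂ)) x) = 0 := by
        apply odd_integral_zero
        intro x
        by_cases hx : x ∈ K
        · rw [Set.indicator_of_mem ((hKsymm x).2 hx), Set.indicator_of_mem hx]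
          push_cast
          ring
        · rw [Set.indicator_of_notMem (fun h => hx ((hKsymm x).1 h)),
            Set.indicator_of_notMem hx, neg_zero]
      rw [hB]
      simp_rw [hpt]
      rw [integral_add hint1 hint2, hodd, add_zero]
    have hBdct : Tendsto (fun ε : ℝ => ∫ x : ℝ, (x^2/(ε^2+x^2) : ℝ) • F x) l
        (nhds (∫ x, F x)) := by
      apply tendsto_integral_filter_of_dominated_convergence (bound := fun x => ‖F x‖)
      · filter_upwards [self_mem_nhdsWithin] with ε (hε : ε ∈ Set.Ioi 0)
        have hε : (0:ℝ) < ε := hε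
        exact (((continuous_pow 2).div (continuous_const.add (continuous_pow 2))
          (fun x => by simp only [Pi.add_apply]; positivity)).aestronglyMeasurable).smul hFmeas
      · filter_upwards [self_mem_nhdsWithin] with ε (hε : ε ∈ Set.Ioi 0)
        have hε : (0:ℝ) < ε := hε
        apply ae_of_all
        intro x
        rw [norm_smul, Real.norm_eq_abs, abs_of_nonneg (by positivity)]
        have h1 : x^2/(ε^2+x^2) ≤ 1 := by
          rw [div_le_one (by positivity)]
          exact le_add_of_nonneg_left (sq_nonneg ε)
        exact mul_le_of_le_one_left (norm_nonneg _) h1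
      · exact hFint.norm
      · filter_upwards [hae0] with x hx
        have hx2 : x^2 ≠ 0 := pow_ne_zero 2 hx
        have h1 : Tendsto (fun ε : ℝ => x^2/(ε^2+x^2)) l (nhds 1) := by
          have h2 : Tendsto (fun ε : ℝ => x^2/(ε^2+x^2)) (nhds 0) (nhds (x^2/(0^2+x^2))) := by
            apply Tendsto.div tendsto_const_nhds
            · exact ((continuous_pow 2).add continuous_const).tendsto 0
            · simpa using hx2
          have h3 : x^2/((0:ℝ)^2+x^2) = 1 := by
            rw [show (0:ℝ)^2 + x^2 = x^2 by ring, div_self hx2]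
          rw [h3] at h2
          exact h2.mono_left nhdsWithin_le_nhds
        have := h1.smul (tendsto_const_nhds (x := F x) (f := l))
        simpa using this
    have hBlim : Tendsto B l (nhds (∫ x, F x)) :=
      Tendsto.congr' (by filter_upwards [hBeq] with ε h; exact h.symm) hBdct
    have hfinal : Tendsto (fun ε : ℝ => A ε - (σ:ℂ) * Complex.I * B ε) l
        (nhds ((π:ℂ) * φ 0 - (σ:ℂ) * Complex.I * (∫ x, F x))) :=
      hAlim.sub (hBlim.const_mul _)
    exact Tendsto.congr' (by filter_upwards [hsplit] with ε h; exact h.symm) hfinal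
end

section
/- Regularized Fourier integral of a fractional power: Let α > −1 be real, ε > 0, and k ∈ ℝ. Define x^α for negative x by the branch with log(−1) = −iπ, i.e. x^α := e^{−iπα}·|x|^α for x < 0 and x^α := x^α (real power) for x > 0. Then ∫_ℝ x^α · e^{−ikx − ε|x|} dx = Γ(α+1) · ( e^{−iπα}·(ε − ik)^{−α−1} + (ε + ik)^{−α−1} ), where (ε ∓ ik)^{−α−1} is the principal complex power (which is unambiguous since Re(ε ∓ ik) = ε > 0) and Γ is the Gamma function. -/
open MeasureTheory Real

/-- The fractional power `x^α` on the real line with the branch convention `log(−1) = −iπ`: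
`x^α = e^{−iπα}|x|^α` for `x < 0` and the usual real power for `x ≥ 0`. -/
noncomputable def branchPow (α : ℝ) (x : ℝ) : ℂ :=
  if x < 0 then Complex.exp (-(π : ℂ) * Complex.I * (α : ℂ)) * ((|x| ^ α : ℝ) : ℂ)
  else ((x ^ α : ℝ) : ℂ)

open Set Filter Metric
open scoped Topology

lemma aux_integrable (α : ℝ) (hα : -1 < α) {b : ℝ} (hb : 0 < b) (w : ℂ) (hwb : b ≤ w.re) :
    IntegrableOn (fun t : ℝ => (t : ℂ) ^ (α : ℂ) * Complex.exp (-(w * t))) (Ioi 0) := by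
  have hbound : IntegrableOn (fun t : ℝ => t ^ α * Real.exp (-b * t)) (Ioi 0) := by
    have h := integrableOn_rpow_mul_exp_neg_mul_rpow hα zero_lt_one hb
    exact h.congr_fun (fun t ht => by simp only [Real.rpow_one]) measurableSet_Ioi
  have hmeas : AEStronglyMeasurable (fun t : ℝ => (t : ℂ) ^ (α : ℂ) * Complex.exp (-(w * t)))
      (volume.restrict (Ioi 0)) := by
    refine ContinuousOn.aestronglyMeasurable (fun t ht => ?_) measurableSet_Ioi
    exact ((Complex.continuousAt_ofReal_cpow_const t (α : ℂ) (Or.inr (ne_of_gt ht))).mul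
      ((continuous_const.mul Complex.continuous_ofReal).neg.cexp.continuousAt)).continuousWithinAt
  refine hbound.integrable.mono' hmeas ?_
  filter_upwards [ae_restrict_mem measurableSet_Ioi] with t ht
  replace ht : 0 < t := ht
  rw [norm_mul,
    Complex.norm_cpow_eq_rpow_re_of_pos ht, Complex.norm_exp]
  simp only [Complex.ofReal_re, Complex.neg_re, Complex.mul_re, Complex.ofReal_im,
    mul_zero, sub_zero]
  have h1 : Real.exp (-(w.re * t)) ≤ Real.exp (-b * t) := by
    apply Real.exp_le_exp.mpr
    nlinarith [le_of_lt ht]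
  exact mul_le_mul_of_nonneg_left h1 (Real.rpow_nonneg (le_of_lt ht) α)

lemma aux_meas (α : ℝ) (g : ℝ → ℂ) (hg : Continuous g) :
    AEStronglyMeasurable (fun t : ℝ => (t : ℂ) ^ (α : ℂ) * g t)
      (volume.restrict (Ioi 0)) := by
  refine ContinuousOn.aestronglyMeasurable (fun t ht => ?_) measurableSet_Ioi
  exact ((Complex.continuousAt_ofReal_cpow_const t (α : ℂ) (Or.inr (ne_of_gt ht))).mul
    hg.continuousAt).continuousWithinAt

lemma aux_bd {s b : ℝ} (hs : -1 < s) (hb : 0 < b) :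
    IntegrableOn (fun t : ℝ => t ^ s * Real.exp (-b * t)) (Ioi 0) :=
  (integrableOn_rpow_mul_exp_neg_mul_rpow hs zero_lt_one hb).congr_fun
    (fun t ht => by simp only [Real.rpow_one]) measurableSet_Ioi

lemma key_laplace (α : ℝ) (hα : -1 < α) (w : ℂ) (hw : 0 < w.re) :
    ∫ t in Ioi (0:ℝ), (t : ℂ) ^ (α : ℂ) * Complex.exp (-(w * t)) =
      Complex.Gamma ((α : ℂ) + 1) * w ^ (-(α : ℂ) - 1) := by
  set U : Set ℂ := {z | 0 < z.re} with hU
  have hUo : IsOpen U := isOpen_lt continuous_const Complex.continuous_re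
  have hUc : IsPreconnected U := (convex_halfSpace_re_gt 0).isPreconnected
  set f : ℂ → ℂ := fun z => ∫ t in Ioi (0:ℝ), (t : ℂ) ^ (α : ℂ) * Complex.exp (-(z * t)) with hf
  set g : ℂ → ℂ := fun z => Complex.Gamma ((α : ℂ) + 1) * z ^ (-(α : ℂ) - 1) with hg
  have hfd : DifferentiableOn ℂ f U := by
    intro z hz
    have hz' : 0 < z.re := hz
    have hb : 0 < z.re / 2 := by positivity
    have hball : ∀ x ∈ ball z (z.re / 2), z.re / 2 ≤ x.re := by
      intro x hx
      have h1 : |x.re - z.re| ≤ ‖x - z‖ := by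
        simpa using Complex.abs_re_le_norm (x - z)
      rw [mem_ball, Complex.dist_eq] at hx
      have := abs_sub_le_iff.mp (le_of_lt (lt_of_le_of_lt h1 hx))
      linarith [this.2]
    have key := hasDerivAt_integral_of_dominated_loc_of_deriv_le
      (F := fun (x : ℂ) (t : ℝ) => (t : ℂ) ^ (α : ℂ) * Complex.exp (-(x * t)))
      (F' := fun (x : ℂ) (t : ℝ) => (t : ℂ) ^ (α : ℂ) * (-(t : ℂ) * Complex.exp (-(x * t))))
      (bound := fun t : ℝ => t ^ (α + 1) * Real.exp (-(z.re / 2) * t))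
      (μ := volume.restrict (Ioi 0)) (x₀ := z) (Metric.ball_mem_nhds z hb)
      (Filter.Eventually.of_forall fun x =>
        aux_meas α _ ((continuous_const.mul Complex.continuous_ofReal).neg.cexp))
      (aux_integrable α hα hb z (by linarith))
      (aux_meas α _ ((Complex.continuous_ofReal.neg).mul
        ((continuous_const.mul Complex.continuous_ofReal).neg.cexp)))
      ?_ ?_ ?_
    · exact key.2.differentiableAt.differentiableWithinAt
    · -- bound
      filter_upwards [ae_restrict_mem measurableSet_Ioi] with t ht x hx
      replace ht : 0 < t := ht
      rw [norm_mul, norm_mul, norm_neg,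
        Complex.norm_cpow_eq_rpow_re_of_pos ht, Complex.norm_exp,
        Complex.norm_real, Real.norm_eq_abs, abs_of_pos ht]
      simp only [Complex.ofReal_re, Complex.neg_re, Complex.mul_re, Complex.ofReal_im,
        mul_zero, sub_zero]
      rw [Real.rpow_add_one (ne_of_gt ht)]
      have h1 : Real.exp (-(x.re * t)) ≤ Real.exp (-(z.re / 2) * t) := by
        apply Real.exp_le_exp.mpr
        have := hball x hx
        nlinarith [le_of_lt ht]
      calc t ^ α * (t * Real.exp (-(x.re * t)))
          ≤ t ^ α * (t * Real.exp (-(z.re / 2) * t)) := by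
            apply mul_le_mul_of_nonneg_left _ (Real.rpow_nonneg (le_of_lt ht) α)
            exact mul_le_mul_of_nonneg_left h1 (le_of_lt ht)
        _ = t ^ α * t * Real.exp (-(z.re / 2) * t) := by ring
    · exact (aux_bd (by linarith : (-1:ℝ) < α + 1) hb).integrable
    · -- differentiability
      filter_upwards [ae_restrict_mem measurableSet_Ioi] with t ht x hx
      have h1 : HasDerivAt (fun x : ℂ => -(x * t)) (-(t : ℂ)) x :=
        ((hasDerivAt_id x).mul_const (t : ℂ)).neg.congr_deriv (by simp)
      have h2 := h1.cexp
      have h3 := h2.const_mul ((t : ℂ) ^ (α : ℂ))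
      exact h3.congr_deriv (by ring)
  have hgd : DifferentiableOn ℂ g U := by
    intro z hz
    have h0 : (z : ℂ) ∈ Complex.slitPlane := Complex.mem_slitPlane_iff.mpr (Or.inl hz)
    exact ((((hasDerivAt_id z).cpow_const h0).differentiableAt).const_mul
      _).differentiableWithinAt
  have hreal : ∀ r : ℝ, 0 < r → f r = g r := by
    intro r hr
    have ha : 0 < ((α : ℂ) + 1).re := by
      simp only [Complex.add_re, Complex.ofReal_re, Complex.one_re]; linarith
    have h := Complex.integral_cpow_mul_exp_neg_mul_Ioi ha hr
    simp only [add_sub_cancel_right] at h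
    rw [hf, hg]
    simp only [h]
    rw [one_div, Complex.inv_cpow _ _ (by
      rw [Complex.arg_ofReal_of_nonneg (le_of_lt hr)]; exact Real.pi_ne_zero.symm),
      ← Complex.cpow_neg]
    rw [mul_comm]
    congr 1
    ring_nf
  have hfreq : ∃ᶠ z in nhdsWithin (1 : ℂ) {(1:ℂ)}ᶜ, f z = g z := by
    have hs : Tendsto (fun n : ℕ => ((1 + ((n : ℝ) + 1)⁻¹ : ℝ) : ℂ)) atTop
        (nhdsWithin (1 : ℂ) {(1:ℂ)}ᶜ) := by
      apply tendsto_nhdsWithin_of_tendsto_nhds_of_eventually_within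
      · have : Tendsto (fun n : ℕ => (1 + ((n : ℝ) + 1)⁻¹ : ℝ)) atTop (nhds 1) := by
          have := tendsto_one_div_add_atTop_nhds_zero_nat (𝕜 := ℝ)
          simpa [one_div] using (tendsto_const_nhds.add this)
        have h2 : Tendsto (fun n : ℕ => ((1 + ((n : ℝ) + 1)⁻¹ : ℝ) : ℂ)) atTop
            (nhds ((1 : ℝ) : ℂ)) := (Complex.continuous_ofReal.tendsto 1).comp this
        simpa using h2
      · refine Filter.Eventually.of_forall fun n => ?_
        simp only [Set.mem_compl_iff, Set.mem_singleton_iff]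
        intro hcon
        have : (1 + ((n : ℝ) + 1)⁻¹ : ℝ) = 1 := by exact_mod_cast hcon
        have hpos : (0:ℝ) < ((n : ℝ) + 1)⁻¹ := by positivity
        linarith
    exact hs.frequently (Filter.Frequently.of_forall fun n => hreal _ (by positivity))
  have heq : Set.EqOn f g U :=
    (hfd.analyticOnNhd hUo).eqOn_of_preconnected_of_frequently_eq
      (hgd.analyticOnNhd hUo) hUc (by simp [hU] : (1:ℂ) ∈ U) hfreq
  exact heq hw

/-- Regularized Fourier integral of a fractional power: for `α > −1`, `ε > 0`, `k ∈ ℝ`,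
`∫ x^α e^{−ikx−ε|x|} dx = Γ(α+1)·(e^{−iπα}(ε−ik)^{−α−1} + (ε+ik)^{−α−1})`. -/
theorem regularized_fourier_fractional_power (α ε k : ℝ) (hα : -1 < α) (hε : 0 < ε) :
    ∫ x : ℝ, branchPow α x * Complex.exp (-Complex.I * (k : ℂ) * (x : ℂ) - ((ε * |x| : ℝ) : ℂ)) =
      (Real.Gamma (α + 1) : ℂ) *
        (Complex.exp (-(π : ℂ) * Complex.I * (α : ℂ)) *
            ((ε : ℂ) - Complex.I * (k : ℂ)) ^ ((-α - 1 : ℝ) : ℂ) +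
          ((ε : ℂ) + Complex.I * (k : ℂ)) ^ ((-α - 1 : ℝ) : ℂ)) := by
  set E : ℂ := Complex.exp (-(π : ℂ) * Complex.I * (α : ℂ)) with hE
  set wp : ℂ := (ε : ℂ) + Complex.I * (k : ℂ) with hwp
  set wm : ℂ := (ε : ℂ) - Complex.I * (k : ℂ) with hwm
  have hwp_re : 0 < wp.re := by simp [hwp, hε]
  have hwm_re : 0 < wm.re := by simp [hwm, hε]
  set h : ℝ → ℂ := fun x =>
    branchPow α x * Complex.exp (-Complex.I * (k : ℂ) * (x : ℂ) - ((ε * |x| : ℝ) : ℂ)) with hh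
  have hpos : ∀ x ∈ Ioi (0:ℝ), h x = (x : ℂ) ^ (α : ℂ) * Complex.exp (-(wp * x)) := by
    intro x hx
    replace hx : 0 < x := hx
    rw [hh]
    simp only [branchPow, not_lt.mpr (le_of_lt hx), if_neg (not_lt.mpr (le_of_lt hx))]
    rw [Complex.ofReal_cpow (le_of_lt hx), abs_of_pos hx]
    congr 1
    push_cast
    rw [hwp]
    ring_nf
  have hneg : ∀ x ∈ Ioi (0:ℝ), h (-x) = E * ((x : ℂ) ^ (α : ℂ) * Complex.exp (-(wm * x))) := by
    intro x hx
    replace hx : 0 < x := hx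
    rw [hh]
    simp only [branchPow, if_pos (neg_lt_zero.mpr hx), abs_neg, abs_of_pos hx]
    rw [Complex.ofReal_cpow (le_of_lt hx), ← hE]
    rw [mul_assoc]
    congr 2
    push_cast
    rw [hwm]
    ring_nf
  have hIoi : IntegrableOn h (Ioi 0) :=
    (aux_integrable α hα hε wp (le_of_eq (by simp [hwp]))).congr_fun
      (fun x hx => (hpos x hx).symm) measurableSet_Ioi
  have hIoi_neg : IntegrableOn (fun x => h (-x)) (Ioi 0) :=
    IntegrableOn.congr_fun
      (show IntegrableOn (fun x : ℝ => E * ((x : ℂ) ^ (α : ℂ) * Complex.exp (-(wm * x))))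
          (Ioi 0) volume from
        (aux_integrable α hα hε wm (le_of_eq (by simp [hwm]))).integrable.const_mul E)
      (fun x hx => (hneg x hx).symm) measurableSet_Ioi
  have hIic : IntegrableOn h (Iic 0) := by
    rw [← Measure.map_neg_eq_self (volume : Measure ℝ)]
    have m : MeasurableEmbedding fun x : ℝ => -x := (Homeomorph.neg ℝ).measurableEmbedding
    rw [m.integrableOn_map_iff]
    simp_rw [Function.comp_def, neg_preimage, neg_Iic, neg_zero]
    exact Iff.mpr integrableOn_Ici_iff_integrableOn_Ioi hIoi_neg
  have hsplit : ∫ x : ℝ, h x = (∫ x in Iic (0:ℝ), h x) + ∫ x in Ioi (0:ℝ), h x :=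
    (intervalIntegral.integral_Iic_add_Ioi hIic hIoi).symm
  have hI1 : ∫ x in Iic (0:ℝ), h x = E * (Complex.Gamma ((α : ℂ) + 1) * wm ^ (-(α:ℂ) - 1)) := by
    have hcomp := integral_comp_neg_Ioi (0:ℝ) h
    rw [neg_zero] at hcomp
    rw [← hcomp, setIntegral_congr_fun measurableSet_Ioi hneg, integral_const_mul,
      key_laplace α hα wm hwm_re]
  have hI2 : ∫ x in Ioi (0:ℝ), h x = Complex.Gamma ((α : ℂ) + 1) * wp ^ (-(α:ℂ) - 1) := by
    rw [setIntegral_congr_fun measurableSet_Ioi hpos, key_laplace α hα wp hwp_re]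
  have hGamma : Complex.Gamma ((α : ℂ) + 1) = (Real.Gamma (α + 1) : ℂ) := by
    rw [← Complex.Gamma_ofReal]; push_cast; ring_nf
  have hexp : ((-α - 1 : ℝ) : ℂ) = -(α:ℂ) - 1 := by push_cast; ring
  rw [hsplit, hI1, hI2, hGamma, hexp]
  ring
end

section
/- Distributional Fourier transform of the principal value 1/x: For every Schwartz function φ : ℝ → ℂ with Fourier transform φ̂(k) = ∫_ℝ φ(x)e^{−ikx}dx, one has lim_{ε→0⁺} ∫_{|x|>ε} φ̂(x)/x dx = −iπ·∫_ℝ sgn(x)·φ(x) dx, where sgn is the sign function. -/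
open MeasureTheory Filter Real

/-- The Fourier transform `φ̂(k) = ∫ φ(x) e^{−ikx} dx` of a Schwartz function. -/
noncomputable def fourierT (φ : SchwartzMap ℝ ℂ) (k : ℝ) : ℂ :=
  ∫ x : ℝ, φ x * Complex.exp (-Complex.I * (k : ℂ) * (x : ℂ))

open Set FourierTransform

lemma integrable_kernel (φ : SchwartzMap ℝ ℂ) (k : ℝ) :
    Integrable (fun x : ℝ => φ x * Complex.exp (-Complex.I * (k : ℂ) * (x : ℂ))) := by
  refine (φ.integrable.norm).mono' ?_ ?_
  · exact (φ.continuous.mul (Complex.continuous_exp.comp (by continuity))).aestronglyMeasurable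
  · filter_upwards with x
    rw [norm_mul]
    simp [Complex.norm_exp]

lemma integrable_xphi (φ : SchwartzMap ℝ ℂ) : Integrable (fun x : ℝ => ‖x‖ * ‖φ x‖) := by
  simpa using φ.integrable_pow_mul (volume : Measure ℝ) 1

lemma fourierT_sub (φ : SchwartzMap ℝ ℂ) (k : ℝ) :
    fourierT φ k - fourierT φ (-k)
      = ∫ x : ℝ, φ x * (-2 * Complex.I * ((Real.sin (k * x) : ℝ) : ℂ)) := by
  rw [fourierT, fourierT, ← integral_sub (integrable_kernel φ k) (integrable_kernel φ (-k))]
  congr 1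
  ext x
  rw [← mul_sub]
  congr 1
  have h1 : (-Complex.I * ((k : ℝ) : ℂ) * (x : ℂ)) = (-((k : ℂ) * x)) * Complex.I := by ring
  have h2 : (-Complex.I * (((-k : ℝ)) : ℂ) * (x : ℂ)) = (((k : ℂ) * x) * Complex.I) := by
    push_cast; ring
  rw [h1, h2]
  rw [show ((Real.sin (k * x) : ℝ) : ℂ) = Complex.sin ((k : ℂ) * x) by push_cast; ring_nf]
  rw [Complex.sin]
  linear_combination (Complex.exp (-((k : ℂ) * x) * Complex.I)
    - Complex.exp ((k : ℂ) * x * Complex.I)) * Complex.I_sq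

lemma fourierT_eq (φ : SchwartzMap ℝ ℂ) (k : ℝ) :
    fourierT φ k = (SchwartzMap.fourierTransformCLM ℂ φ) (k / (2 * π)) := by
  rw [SchwartzMap.fourierTransformCLM_apply, SchwartzMap.fourier_coe, Real.fourier_eq', fourierT]
  congr 1
  ext x
  rw [smul_eq_mul, mul_comm]
  congr 1
  have hpi : (2 : ℝ) * π ≠ 0 := by positivity
  congr 1
  push_cast
  rw [RCLike.inner_apply, conj_trivial]
  have hpiC : (π : ℂ) ≠ 0 := Complex.ofReal_ne_zero.mpr pi_ne_zero
  push_cast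
  field_simp

lemma integrable_fourierT (φ : SchwartzMap ℝ ℂ) : Integrable (fourierT φ) := by
  have h2pi : (2 : ℝ) * π ≠ 0 := by positivity
  have : Integrable (fun k : ℝ => (SchwartzMap.fourierTransformCLM ℂ φ) (k / (2 * π))) :=
    (MeasureTheory.integrable_comp_div_iff
      ((SchwartzMap.fourierTransformCLM ℂ φ) : ℝ → ℂ) h2pi).2
      (SchwartzMap.fourierTransformCLM ℂ φ).integrable
  exact this.congr (by filter_upwards with k using (fourierT_eq φ k).symm)

lemma continuous_fourierT (φ : SchwartzMap ℝ ℂ) : Continuous (fourierT φ) := by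
  have : Continuous fun k : ℝ => (SchwartzMap.fourierTransformCLM ℂ φ) (k / (2 * π)) :=
    (SchwartzMap.fourierTransformCLM ℂ φ).continuous.comp (continuous_id.div_const _)
  exact this.congr fun k => (fourierT_eq φ k).symm

lemma integral_cos_exp {δ : ℝ} (hδ : 0 < δ) (x : ℝ) :
    ∫ k in Ioi (0:ℝ), Real.cos (k * x) * Real.exp (-(δ * k)) = δ / (δ ^ 2 + x ^ 2) := by
  set c : ℂ := x * Complex.I - δ with hc
  have hcre : c.re = -δ := by simp [hc]
  have hcim : c.im = x := by simp [hc]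
  have hc0 : c ≠ 0 := fun h => by simp [h] at hcre; linarith
  have hnorm : ∀ k : ℝ, ‖Complex.exp (c * k)‖ = Real.exp (-(δ * k)) := by
    intro k
    rw [Complex.norm_exp]
    congr 1
    simp [Complex.mul_re, hcre, hcim]
  have hint : IntegrableOn (fun k : ℝ => Complex.exp (c * k)) (Ioi 0) := by
    have hb : IntegrableOn (fun k : ℝ => Real.exp (-(δ * k))) (Ioi 0) := by
      have := exp_neg_integrableOn_Ioi 0 hδ
      simpa [neg_mul] using this
    refine hb.mono' ?_ ?_
    · exact (Complex.continuous_exp.comp (by continuity)).aestronglyMeasurable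
    · filter_upwards with k using le_of_eq (hnorm k)
  have hval : ∫ k in Ioi (0:ℝ), Complex.exp (c * k) = -1 / c := by
    have t1 := intervalIntegral_tendsto_integral_Ioi 0 hint tendsto_id
    have t2 : Tendsto (fun b : ℝ => ∫ k in (0:ℝ)..b, Complex.exp (c * k)) atTop
        (nhds (-1 / c)) := by
      have heq : ∀ b : ℝ, (∫ k in (0:ℝ)..b, Complex.exp (c * k))
          = (Complex.exp (c * b) - 1) / c := by
        intro b
        rw [integral_exp_mul_complex hc0]
        norm_num
      rw [show (fun b : ℝ => ∫ k in (0:ℝ)..b, Complex.exp (c * k))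
          = fun b : ℝ => (Complex.exp (c * b) - 1) / c from funext heq]
      have hexp : Tendsto (fun b : ℝ => Complex.exp (c * b)) atTop (nhds 0) := by
        rw [tendsto_zero_iff_norm_tendsto_zero]
        simp only [hnorm]
        refine Real.tendsto_exp_atBot.comp ?_
        have h1 : Tendsto (fun b : ℝ => δ * b) atTop atTop :=
          Tendsto.const_mul_atTop hδ tendsto_id
        simpa [Function.comp_def] using tendsto_neg_atTop_atBot.comp h1
      have h2 : Tendsto (fun b : ℝ => (Complex.exp (c * b) - 1) / c) atTop
          (nhds ((0 - 1) / c)) := (hexp.sub (tendsto_const_nhds (x := (1:ℂ)))).div_const c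
      simpa using h2
    exact tendsto_nhds_unique t1 t2
  have hre : ∀ k : ℝ, Real.cos (k * x) * Real.exp (-(δ * k)) = (Complex.exp (c * k)).re := by
    intro k
    rw [Complex.exp_re]
    simp [Complex.mul_re, Complex.mul_im, hcre, hcim]
    ring_nf
  calc ∫ k in Ioi (0:ℝ), Real.cos (k * x) * Real.exp (-(δ * k))
      = ∫ k in Ioi (0:ℝ), (Complex.exp (c * k)).re := by simp_rw [hre]
    _ = (∫ k in Ioi (0:ℝ), Complex.exp (c * k)).re := by
        simpa using integral_re hint
    _ = (-1 / c).re := by rw [hval]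
    _ = δ / (δ ^ 2 + x ^ 2) := by
        rw [Complex.div_re]
        simp [Complex.normSq_apply, hcre, hcim]
        ring

lemma integral_sin_exp_div {δ : ℝ} (hδ : 0 < δ) (x : ℝ) :
    ∫ k in Ioi (0:ℝ), Real.sin (k * x) * Real.exp (-(δ * k)) / k = Real.arctan (x / δ) := by
  set Φ : ℝ → ℝ := fun y => ∫ k in Ioi (0:ℝ), Real.sin (k * y) * Real.exp (-(δ * k)) / k with hΦdef
  have hbint : IntegrableOn (fun k : ℝ => Real.exp (-(δ * k))) (Ioi 0) := by
    simpa [neg_mul] using exp_neg_integrableOn_Ioi 0 hδ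
  have hmeas : ∀ y : ℝ, AEStronglyMeasurable
      (fun k : ℝ => Real.sin (k * y) * Real.exp (-(δ * k)) / k)
      (volume.restrict (Ioi 0)) := by
    intro y
    refine Measurable.aestronglyMeasurable ?_
    exact ((Real.measurable_sin.comp (measurable_id.mul_const y)).mul
      (Real.measurable_exp.comp (measurable_id.const_mul δ).neg)).div measurable_id
  have hFint : ∀ y : ℝ, Integrable (fun k : ℝ => Real.sin (k * y) * Real.exp (-(δ * k)) / k)
      (volume.restrict (Ioi 0)) := by
    intro y
    refine (hbint.const_mul |y|).mono' (hmeas y) ?_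
    filter_upwards [ae_restrict_mem measurableSet_Ioi] with k hk
    have hk0 : 0 < k := hk
    rw [norm_div, norm_mul]
    simp only [Real.norm_eq_abs, abs_of_pos hk0, Real.abs_exp]
    rw [div_le_iff₀ hk0]
    have : |Real.sin (k * y)| ≤ |k * y| := Real.abs_sin_le_abs
    calc |Real.sin (k * y)| * Real.exp (-(δ * k)) ≤ |k * y| * Real.exp (-(δ * k)) := by
          gcongr
      _ = |y| * Real.exp (-(δ * k)) * k := by rw [abs_mul, abs_of_pos hk0]; ring
  have hderiv : ∀ y : ℝ, HasDerivAt Φ (δ / (δ ^ 2 + y ^ 2)) y := by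
    intro y₀
    have key := hasDerivAt_integral_of_dominated_loc_of_deriv_le (s := Metric.ball y₀ 1) (Metric.ball_mem_nhds y₀ one_pos)
      (F := fun y k => Real.sin (k * y) * Real.exp (-(δ * k)) / k)
      (F' := fun y k => Real.cos (k * y) * Real.exp (-(δ * k)))
      (x₀ := y₀) (bound := fun k => Real.exp (-(δ * k)))
      (μ := volume.restrict (Ioi 0))
      (by filter_upwards with y using hmeas y)
      (hFint y₀)
      ((Real.continuous_cos.comp (continuous_id.mul continuous_const)).mul
        ((Real.continuous_exp.comp (continuous_const.mul continuous_id).neg))).aestronglyMeasurable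
      ?_ hbint ?_
    · have := key.2
      rwa [integral_cos_exp hδ y₀] at this
    · filter_upwards with k
      intro y _
      rw [norm_mul]
      simp only [Real.norm_eq_abs, Real.abs_exp]
      have : |Real.cos (k * y)| ≤ 1 := Real.abs_cos_le_one _
      nlinarith [Real.exp_pos (-(δ * k))]
    · filter_upwards [ae_restrict_mem measurableSet_Ioi] with k hk
      intro y _
      have hk0 : (0:ℝ) < k := hk
      have h1 : HasDerivAt (fun y : ℝ => Real.sin (k * y)) (Real.cos (k * y) * k) y := by
        simpa [Function.comp_def] using (Real.hasDerivAt_sin (k * y)).comp y ((hasDerivAt_id y).const_mul k)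
      have h2 := (h1.mul_const (Real.exp (-(δ * k)))).div_const k
      refine h2.congr_deriv ?_
      field_simp
  have harctan : ∀ y : ℝ, HasDerivAt (fun y : ℝ => Real.arctan (y / δ)) (δ / (δ ^ 2 + y ^ 2)) y := by
    intro y
    have h1 := (Real.hasDerivAt_arctan (y / δ)).comp y ((hasDerivAt_id y).div_const δ)
    refine h1.congr_deriv ?_
    have hδ' : δ ≠ 0 := ne_of_gt hδ
    field_simp
  have hconst : ∀ y : ℝ, Φ y - Real.arctan (y / δ) = Φ 0 - Real.arctan (0 / δ) := by
    intro y
    have hdiff : Differentiable ℝ (fun y => Φ y - Real.arctan (y / δ)) :=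
      fun y => ((hderiv y).sub (harctan y)).differentiableAt
    have hzero : ∀ y : ℝ, deriv (fun y => Φ y - Real.arctan (y / δ)) y = 0 := by
      intro y
      have : deriv (fun y => Φ y - Real.arctan (y / δ)) y = δ / (δ ^ 2 + y ^ 2) - δ / (δ ^ 2 + y ^ 2) :=
        ((hderiv y).sub (harctan y)).deriv
      rw [this]; simp
    exact is_const_of_deriv_eq_zero hdiff hzero y 0
  have hΦ0 : Φ 0 = 0 := by
    rw [hΦdef]
    simp
  have := hconst x
  rw [hΦ0] at this
  simp only [zero_div, Real.arctan_zero, sub_zero] at this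
  linarith [this]

lemma fubini_step (φ : SchwartzMap ℝ ℂ) {δ : ℝ} (hδ : 0 < δ) :
    ∫ k in Ioi (0:ℝ),
        (fourierT φ k / (k : ℂ) + fourierT φ (-k) / (((-k : ℝ)) : ℂ))
          * ((Real.exp (-(δ * k)) : ℝ) : ℂ)
      = ∫ x : ℝ, φ x * (-2 * Complex.I) * ((Real.arctan (x / δ) : ℝ) : ℂ) := by
  set Ψ : ℝ → ℝ → ℂ := fun k x =>
    φ x * (-2 * Complex.I * ((Real.sin (k * x) : ℝ) : ℂ))
      * (((Real.exp (-(δ * k)) : ℝ) : ℂ) / (k : ℂ)) with hΨ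
  have step1 : ∫ k in Ioi (0:ℝ),
      (fourierT φ k / (k : ℂ) + fourierT φ (-k) / (((-k : ℝ)) : ℂ))
        * ((Real.exp (-(δ * k)) : ℝ) : ℂ)
      = ∫ k in Ioi (0:ℝ), ∫ x : ℝ, Ψ k x := by
    refine setIntegral_congr_fun measurableSet_Ioi (fun k hk => ?_)
    have hk0 : (0:ℝ) < k := hk
    have hkC : (k : ℂ) ≠ 0 := by exact_mod_cast ne_of_gt hk0
    have e1 : fourierT φ k / (k : ℂ) + fourierT φ (-k) / (((-k : ℝ)) : ℂ)
        = (fourierT φ k - fourierT φ (-k)) * ((k : ℂ))⁻¹ := by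
      push_cast
      field_simp
      ring
    rw [e1, fourierT_sub φ k]
    rw [show (∫ x : ℝ, φ x * (-2 * Complex.I * ((Real.sin (k * x) : ℝ) : ℂ))) * ((k : ℂ))⁻¹
          * ((Real.exp (-(δ * k)) : ℝ) : ℂ)
        = (∫ x : ℝ, φ x * (-2 * Complex.I * ((Real.sin (k * x) : ℝ) : ℂ)))
          * (((Real.exp (-(δ * k)) : ℝ) : ℂ) / (k : ℂ)) by ring]
    rw [← integral_mul_const]
  rw [step1]
  have hmeasΨ : AEStronglyMeasurable (Function.uncurry Ψ)
      ((volume.restrict (Ioi 0)).prod volume) := by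
    refine Measurable.aestronglyMeasurable ?_
    apply Measurable.mul
    · apply Measurable.mul
      · exact (φ.continuous.measurable.comp measurable_snd).mono le_rfl le_rfl
        |>.comp measurable_id
      · exact measurable_const.mul (Complex.measurable_ofReal.comp
          (Real.measurable_sin.comp (measurable_fst.mul measurable_snd)))
    · exact (Complex.measurable_ofReal.comp
        (Real.measurable_exp.comp (measurable_fst.const_mul δ).neg)).div
        (Complex.measurable_ofReal.comp measurable_fst)
  have hintΨ : Integrable (Function.uncurry Ψ) ((volume.restrict (Ioi 0)).prod volume) := by
    have hbint : Integrable (fun k : ℝ => Real.exp (-(δ * k))) (volume.restrict (Ioi 0)) := by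
      simpa [neg_mul, IntegrableOn] using exp_neg_integrableOn_Ioi 0 hδ
    have hM : Integrable
        (fun p : ℝ × ℝ => Real.exp (-(δ * p.1)) * (2 * (‖p.2‖ * ‖φ p.2‖)))
        ((volume.restrict (Ioi 0)).prod volume) :=
      hbint.mul_prod ((integrable_xphi φ).const_mul 2)
    refine hM.mono' hmeasΨ ?_
    filter_upwards with p
    obtain ⟨k, x⟩ := p
    simp only [Function.uncurry, hΨ]
    rw [norm_mul, norm_mul, norm_div]
    simp only [Complex.norm_real, Real.norm_eq_abs, Real.abs_exp, norm_mul, Complex.norm_I,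
      norm_neg, mul_one, show ‖(2:ℂ)‖ = 2 from by simp]
    rcases eq_or_ne k 0 with rfl | hk0
    · simp
      positivity
    · have h1 : |Real.sin (k * x)| ≤ |k| * |x| := by
        rw [← abs_mul]; exact Real.abs_sin_le_abs
      have h2 : (0:ℝ) < |k| := abs_pos.mpr hk0
      calc ‖φ x‖ * (2 * |Real.sin (k * x)|) * (Real.exp (-(δ * k)) / |k|)
          ≤ ‖φ x‖ * (2 * (|k| * |x|)) * (Real.exp (-(δ * k)) / |k|) := by gcongr
        _ = Real.exp (-(δ * k)) * (2 * (|x| * ‖φ x‖)) := by field_simp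
  rw [integral_integral_swap hintΨ]
  refine integral_congr_ae (Filter.Eventually.of_forall fun x => ?_)
  have inner : ∀ k : ℝ, Ψ k x
      = (φ x * (-2 * Complex.I)) * ((Real.sin (k * x) * Real.exp (-(δ * k)) / k : ℝ) : ℂ) := by
    intro k
    rw [hΨ]
    push_cast
    ring
  simp_rw [inner]
  rw [integral_const_mul]
  congr 1
  rw [← integral_sin_exp_div hδ x]
  exact integral_ofReal

noncomputable def hfun (φ : SchwartzMap ℝ ℂ) (k : ℝ) : ℂ :=
  fourierT φ k / (k : ℂ) + fourierT φ (-k) / (((-k : ℝ)) : ℂ)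

lemma hfun_eq (φ : SchwartzMap ℝ ℂ) {k : ℝ} (hk : k ≠ 0) :
    hfun φ k = (fourierT φ k - fourierT φ (-k)) * ((k : ℂ))⁻¹ := by
  have hkC : (k : ℂ) ≠ 0 := by exact_mod_cast hk
  rw [hfun]
  push_cast
  field_simp
  ring

lemma measurable_hfun (φ : SchwartzMap ℝ ℂ) : Measurable (hfun φ) := by
  have h1 := (continuous_fourierT φ).measurable
  exact ((h1.div (Complex.measurable_ofReal.comp measurable_id)).add
    ((h1.comp measurable_neg).div (Complex.measurable_ofReal.comp measurable_neg)))

lemma hfun_bound (φ : SchwartzMap ℝ ℂ) {k : ℝ} (hk : 0 < k) :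
    ‖hfun φ k‖ ≤ 2 * ∫ x : ℝ, ‖x‖ * ‖φ x‖ := by
  have hC : 0 ≤ ∫ x : ℝ, ‖x‖ * ‖φ x‖ :=
    integral_nonneg fun x => by positivity
  rw [hfun_eq φ (ne_of_gt hk), fourierT_sub φ k, norm_mul, norm_inv]
  have h1 : ‖∫ x : ℝ, φ x * (-2 * Complex.I * ((Real.sin (k * x) : ℝ) : ℂ))‖
      ≤ (2 * k) * ∫ x : ℝ, ‖x‖ * ‖φ x‖ := by
    rw [← integral_const_mul]
    refine norm_integral_le_of_norm_le (((integrable_xphi φ)).const_mul (2 * k)) ?_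
    filter_upwards with x
    rw [norm_mul, norm_mul, norm_mul]
    simp only [Complex.norm_real, Real.norm_eq_abs, Complex.norm_I, mul_one,
      show ‖(-2:ℂ)‖ = 2 from by simp]
    have h1 : |Real.sin (k * x)| ≤ |k| * |x| := by rw [← abs_mul]; exact Real.abs_sin_le_abs
    calc ‖φ x‖ * (2 * |Real.sin (k * x)|) ≤ ‖φ x‖ * (2 * (|k| * |x|)) := by gcongr
      _ = 2 * k * (|x| * ‖φ x‖) := by rw [abs_of_pos hk]; ring
  have h2 : ‖((k : ℂ))‖⁻¹ = k⁻¹ := by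
    rw [Complex.norm_real, Real.norm_eq_abs, abs_of_pos hk]
  rw [h2]
  calc ‖∫ x : ℝ, φ x * (-2 * Complex.I * ((Real.sin (k * x) : ℝ) : ℂ))‖ * k⁻¹
      ≤ ((2 * k) * ∫ x : ℝ, ‖x‖ * ‖φ x‖) * k⁻¹ := by gcongr
    _ = 2 * ∫ x : ℝ, ‖x‖ * ‖φ x‖ := by field_simp

lemma integrableOn_hfun (φ : SchwartzMap ℝ ℂ) : IntegrableOn (hfun φ) (Ioi 0) := by
  have hmeas : AEStronglyMeasurable (hfun φ) (volume : Measure ℝ) :=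
    (measurable_hfun φ).aestronglyMeasurable
  rw [← Ioc_union_Ioi_eq_Ioi (zero_le_one (α := ℝ))]
  refine IntegrableOn.union ?_ ?_
  · refine Integrable.mono' (g := fun _ => 2 * ∫ x : ℝ, ‖x‖ * ‖φ x‖) ?_ hmeas.restrict ?_
    · exact integrableOn_const measure_Ioc_lt_top.ne
    · filter_upwards [ae_restrict_mem measurableSet_Ioc] with k hk
      exact hfun_bound φ hk.1
  · have hnegint : Integrable (fun k : ℝ => fourierT φ (-k)) := by
      have := (MeasureTheory.integrable_comp_mul_left_iff (fourierT φ)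
        (R := (-1:ℝ)) (by norm_num)).2 (integrable_fourierT φ)
      simpa [neg_one_mul] using this
    refine Integrable.mono'
      (g := fun k => ‖fourierT φ k‖ + ‖fourierT φ (-k)‖) ?_ hmeas.restrict ?_
    · exact ((integrable_fourierT φ).norm.add hnegint.norm).integrableOn
    · filter_upwards [ae_restrict_mem measurableSet_Ioi] with k hk
      have hk1 : (1:ℝ) < k := hk
      have hkabs : (1:ℝ) ≤ |k| := by rw [abs_of_pos (by linarith)]; linarith
      rw [hfun]
      refine (norm_add_le _ _).trans ?_
      rw [norm_div, norm_div]
      gcongr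
      · refine div_le_self (norm_nonneg _) ?_
        rw [Complex.norm_real, Real.norm_eq_abs]; exact hkabs
      · refine div_le_self (norm_nonneg _) ?_
        rw [Complex.norm_real, Real.norm_eq_abs, abs_neg]; exact hkabs

lemma integrableOn_g (φ : SchwartzMap ℝ ℂ) {ε : ℝ} (hε : 0 < ε) {s : Set ℝ}
    (hsm : MeasurableSet s) (hs : ∀ x ∈ s, ε ≤ |x|) :
    IntegrableOn (fun x : ℝ => fourierT φ x / (x : ℂ)) s := by
  refine Integrable.mono' (g := fun x => ε⁻¹ * ‖fourierT φ x‖)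
    ((integrable_fourierT φ).norm.const_mul ε⁻¹).integrableOn
    ((continuous_fourierT φ).measurable.div
      Complex.measurable_ofReal).aestronglyMeasurable.restrict ?_
  filter_upwards [ae_restrict_mem hsm] with x hx
  rw [norm_div, Complex.norm_real, Real.norm_eq_abs]
  have h1 : ε ≤ |x| := hs x hx
  calc ‖fourierT φ x‖ / |x| ≤ ‖fourierT φ x‖ / ε := by gcongr
    _ = ε⁻¹ * ‖fourierT φ x‖ := by rw [div_eq_inv_mul]

lemma integrableOn_gneg (φ : SchwartzMap ℝ ℂ) {ε : ℝ} (hε : 0 < ε) :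
    IntegrableOn (fun x : ℝ => fourierT φ (-x) / (((-x : ℝ)) : ℂ)) (Ioi ε) := by
  have hnegint : Integrable (fun k : ℝ => fourierT φ (-k)) := by
    have := (MeasureTheory.integrable_comp_mul_left_iff (fourierT φ)
      (R := (-1:ℝ)) (by norm_num)).2 (integrable_fourierT φ)
    simpa [neg_one_mul] using this
  refine Integrable.mono' (g := fun x => ε⁻¹ * ‖fourierT φ (-x)‖)
    (hnegint.norm.const_mul ε⁻¹).integrableOn
    (((continuous_fourierT φ).measurable.comp measurable_neg).div
      (Complex.measurable_ofReal.comp measurable_neg)).aestronglyMeasurable.restrict ?_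
  filter_upwards [ae_restrict_mem measurableSet_Ioi] with x hx
  rw [norm_div, Complex.norm_real, Real.norm_eq_abs, abs_neg]
  have h1 : ε ≤ |x| := by rw [abs_of_pos (lt_trans hε hx)]; exact le_of_lt hx
  calc ‖fourierT φ (-x)‖ / |x| ≤ ‖fourierT φ (-x)‖ / ε := by gcongr
    _ = ε⁻¹ * ‖fourierT φ (-x)‖ := by rw [div_eq_inv_mul]

lemma split_integral (φ : SchwartzMap ℝ ℂ) {ε : ℝ} (hε : 0 < ε) :
    ∫ x in {x : ℝ | ε < |x|}, fourierT φ x / (x : ℂ) = ∫ k in Ioi ε, hfun φ k := by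
  have hset : {x : ℝ | ε < |x|} = Iio (-ε) ∪ Ioi ε := by
    ext x
    simp only [mem_setOf_eq, mem_union, mem_Iio, mem_Ioi, lt_abs]
    constructor
    · rintro (h | h)
      · exact Or.inr h
      · exact Or.inl (by linarith)
    · rintro (h | h)
      · exact Or.inr (by linarith)
      · exact Or.inl h
  have hdisj : Disjoint (Iio (-ε)) (Ioi ε) := by
    refine Set.disjoint_left.2 fun x hx1 hx2 => ?_
    simp only [mem_Iio] at hx1
    simp only [mem_Ioi] at hx2
    linarith
  have hIoi : IntegrableOn (fun x : ℝ => fourierT φ x / (x : ℂ)) (Ioi ε) :=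
    integrableOn_g φ hε measurableSet_Ioi
      (fun x hx => by rw [abs_of_pos (lt_trans hε hx)]; exact le_of_lt hx)
  have hIio : IntegrableOn (fun x : ℝ => fourierT φ x / (x : ℂ)) (Iio (-ε)) :=
    integrableOn_g φ hε measurableSet_Iio
      (fun x hx => by
        have : x < -ε := hx
        rw [abs_of_neg (by linarith)]; linarith)
  rw [hset, setIntegral_union hdisj measurableSet_Ioi hIio hIoi,
    ← integral_Iic_eq_integral_Iio, ← integral_comp_neg_Ioi,
    ← integral_add (integrableOn_gneg φ hε) hIoi]
  refine setIntegral_congr_fun measurableSet_Ioi (fun k _ => ?_)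
  rw [hfun]
  ring

lemma tendsto_truncation (φ : SchwartzMap ℝ ℂ) :
    Tendsto (fun ε => ∫ k in Ioi ε, hfun φ k) (nhdsWithin 0 (Set.Ioi 0))
      (nhds (∫ k in Ioi (0:ℝ), hfun φ k)) := by
  have hInt := integrableOn_hfun φ
  have key := tendsto_integral_filter_of_dominated_convergence (μ := (volume : Measure ℝ))
    (l := nhdsWithin (0:ℝ) (Set.Ioi 0))
    (F := fun ε k => (Ioi ε).indicator (hfun φ) k) (f := (Ioi (0:ℝ)).indicator (hfun φ))
    (bound := (Ioi (0:ℝ)).indicator (fun k => ‖hfun φ k‖))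
    (Eventually.of_forall fun ε =>
      ((measurable_hfun φ).indicator measurableSet_Ioi).aestronglyMeasurable)
    ?bound ((integrable_indicator_iff measurableSet_Ioi).2 hInt.norm) ?lim
  · simp_rw [integral_indicator measurableSet_Ioi] at key
    exact key
  case bound =>
    filter_upwards [self_mem_nhdsWithin] with ε (hε : 0 < ε)
    filter_upwards with k
    by_cases hk : k ∈ Ioi ε
    · rw [Set.indicator_of_mem hk,
        Set.indicator_of_mem (show k ∈ Ioi (0:ℝ) from lt_trans hε hk)]
    · rw [Set.indicator_of_notMem hk, norm_zero]
      exact Set.indicator_apply_nonneg fun _ => norm_nonneg _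
  case lim =>
    filter_upwards with k
    by_cases hk : 0 < k
    · refine Tendsto.congr' ?_ tendsto_const_nhds
      filter_upwards [Ioo_mem_nhdsGT hk] with ε hε
      rw [Set.indicator_of_mem (show k ∈ Ioi ε from mem_Ioi.2 hε.2),
        Set.indicator_of_mem (show k ∈ Ioi (0:ℝ) from mem_Ioi.2 hk)]
    · refine Tendsto.congr' ?_ tendsto_const_nhds
      filter_upwards [self_mem_nhdsWithin] with ε (hε : 0 < ε)
      rw [Set.indicator_of_notMem (show k ∉ Ioi (0:ℝ) from fun h => hk h),
        Set.indicator_of_notMem (show k ∉ Ioi ε from fun h => hk (lt_trans hε h))]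

lemma tendsto_abel (φ : SchwartzMap ℝ ℂ) :
    Tendsto (fun δ => ∫ k in Ioi (0:ℝ), hfun φ k * ((Real.exp (-(δ * k)) : ℝ) : ℂ))
      (nhdsWithin 0 (Set.Ioi 0)) (nhds (∫ k in Ioi (0:ℝ), hfun φ k)) := by
  have hInt := integrableOn_hfun φ
  refine tendsto_integral_filter_of_dominated_convergence
    (μ := (volume : Measure ℝ).restrict (Ioi 0)) (bound := fun k => ‖hfun φ k‖) ?_ ?_ hInt.norm ?_
  · filter_upwards with δ
    exact ((measurable_hfun φ).mul (Complex.measurable_ofReal.comp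
      (Real.measurable_exp.comp (measurable_id.const_mul δ).neg))).aestronglyMeasurable
  · filter_upwards [self_mem_nhdsWithin] with δ (hδ : 0 < δ)
    filter_upwards [ae_restrict_mem measurableSet_Ioi] with k (hk : 0 < k)
    rw [norm_mul, Complex.norm_real, Real.norm_eq_abs, Real.abs_exp]
    refine mul_le_of_le_one_right (norm_nonneg _) ?_
    rw [Real.exp_le_one_iff]
    have : 0 ≤ δ * k := by positivity
    linarith
  · filter_upwards [ae_restrict_mem measurableSet_Ioi] with k (hk : 0 < k)
    have hcont : Continuous fun δ : ℝ => hfun φ k * ((Real.exp (-(δ * k)) : ℝ) : ℂ) :=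
      continuous_const.mul (Complex.continuous_ofReal.comp
        (Real.continuous_exp.comp (continuous_id.mul continuous_const).neg))
    exact (hcont.tendsto' 0 _ (by simp)).mono_left nhdsWithin_le_nhds

lemma tendsto_arctan_integral (φ : SchwartzMap ℝ ℂ) :
    Tendsto (fun δ => ∫ x : ℝ, φ x * (-2 * Complex.I) * ((Real.arctan (x / δ) : ℝ) : ℂ))
      (nhdsWithin 0 (Set.Ioi 0))
      (nhds (-Complex.I * (π : ℂ) * ∫ x : ℝ, ((Real.sign x : ℝ) : ℂ) * φ x)) := by
  have htarget : (-Complex.I * (π : ℂ) * ∫ x : ℝ, ((Real.sign x : ℝ) : ℂ) * φ x)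
      = ∫ x : ℝ, φ x * (-2 * Complex.I) * (((π / 2) * Real.sign x : ℝ) : ℂ) := by
    rw [← integral_const_mul]
    congr 1
    funext x
    push_cast
    ring
  rw [htarget]
  refine tendsto_integral_filter_of_dominated_convergence (bound := fun x => π * ‖φ x‖)
    ?_ ?_ (φ.integrable.norm.const_mul π) ?_
  · filter_upwards with δ
    exact ((φ.continuous.mul continuous_const).mul (Complex.continuous_ofReal.comp
      (Real.continuous_arctan.comp (continuous_id.div_const δ)))).aestronglyMeasurable
  · filter_upwards with δ
    filter_upwards with x
    rw [norm_mul, norm_mul, Complex.norm_real, Real.norm_eq_abs,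
      show ‖(-2 * Complex.I : ℂ)‖ = 2 from by simp]
    have h1 : |Real.arctan (x / δ)| ≤ π / 2 :=
      le_of_lt (abs_lt.2 ⟨Real.neg_pi_div_two_lt_arctan _, Real.arctan_lt_pi_div_two _⟩)
    calc ‖φ x‖ * 2 * |Real.arctan (x / δ)| ≤ ‖φ x‖ * 2 * (π / 2) := by gcongr
      _ = π * ‖φ x‖ := by ring
  · have hne : ∀ᵐ x : ℝ, x ≠ 0 := by
      refine ae_iff.2 ?_
      simp only [ne_eq, not_not, Set.setOf_eq_eq_singleton]
      exact Real.volume_singleton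
    filter_upwards [hne] with x hx
    rcases lt_or_gt_of_ne hx with hneg | hpos
    · have h1 : Tendsto (fun δ : ℝ => x / δ) (nhdsWithin 0 (Set.Ioi 0)) atBot := by
        simp only [div_eq_mul_inv]
        exact Filter.Tendsto.const_mul_atTop_of_neg hneg tendsto_inv_nhdsGT_zero
      have h2 : Tendsto (fun δ : ℝ => Real.arctan (x / δ)) (nhdsWithin 0 (Set.Ioi 0))
          (nhds (-(π / 2))) :=
        (Real.tendsto_arctan_atBot.mono_right nhdsWithin_le_nhds).comp h1
      have h3 := (tendsto_const_nhds (x := φ x * (-2 * Complex.I))).mul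
        ((Complex.continuous_ofReal.tendsto _).comp h2)
      have : (π / 2) * Real.sign x = -(π / 2) := by
        rw [Real.sign_of_neg hneg]; ring
      rw [this]
      exact h3
    · have h1 : Tendsto (fun δ : ℝ => x / δ) (nhdsWithin 0 (Set.Ioi 0)) atTop := by
        simp only [div_eq_mul_inv]
        exact Filter.Tendsto.const_mul_atTop hpos tendsto_inv_nhdsGT_zero
      have h2 : Tendsto (fun δ : ℝ => Real.arctan (x / δ)) (nhdsWithin 0 (Set.Ioi 0))
          (nhds (π / 2)) :=
        (Real.tendsto_arctan_atTop.mono_right nhdsWithin_le_nhds).comp h1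
      have h3 := (tendsto_const_nhds (x := φ x * (-2 * Complex.I))).mul
        ((Complex.continuous_ofReal.tendsto _).comp h2)
      have : (π / 2) * Real.sign x = π / 2 := by
        rw [Real.sign_of_pos hpos]; ring
      rw [this]
      exact h3

/-- Distributional Fourier transform of the principal value `1/x`:
`lim_{ε→0⁺} ∫_{|x|>ε} φ̂(x)/x dx = −iπ ∫ sgn(x) φ(x) dx`. -/
theorem fourier_principal_value (φ : SchwartzMap ℝ ℂ) :
    Tendsto (fun ε : ℝ => ∫ x in {x : ℝ | ε < |x|}, fourierT φ x / (x : ℂ))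
      (nhdsWithin 0 (Set.Ioi 0))
      (nhds (-Complex.I * (π : ℂ) * ∫ x : ℝ, ((Real.sign x : ℝ) : ℂ) * φ x)) := by

  have h1 := tendsto_truncation φ
  have heq : (∫ k in Ioi (0:ℝ), hfun φ k)
      = -Complex.I * (π : ℂ) * ∫ x : ℝ, ((Real.sign x : ℝ) : ℂ) * φ x := by
    have h2 := tendsto_abel φ
    have h3 : (fun δ => ∫ k in Ioi (0:ℝ), hfun φ k * ((Real.exp (-(δ * k)) : ℝ) : ℂ))
        =ᶠ[nhdsWithin 0 (Set.Ioi 0)]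
        (fun δ => ∫ x : ℝ, φ x * (-2 * Complex.I) * ((Real.arctan (x / δ) : ℝ) : ℂ)) := by
      filter_upwards [self_mem_nhdsWithin] with δ (hδ : 0 < δ)
      have := fubini_step φ hδ
      simpa only [hfun] using this
    exact tendsto_nhds_unique (h2.congr' h3) (tendsto_arctan_integral φ)
  rw [← heq]
  refine Tendsto.congr' ?_ h1
  filter_upwards [self_mem_nhdsWithin] with ε (hε : 0 < ε)
  exact (split_integral φ hε).symm
end

section
/- Distributional derivative of the principal value 1/x equals minus the finite part of 1/x²: For every Schwartz function φ : ℝ → ℂ, the limit lim_{ε→0⁺} ( ∫_{|x|>ε} φ(x)/x² dx − 2·φ(0)/ε ) exists and lim_{ε→0⁺} ∫_{|x|>ε} φ′(x)/x dx = lim_{ε→0⁺} ( ∫_{|x|>ε} φ(x)/x² dx − 2·φ(0)/ε ). -/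
open MeasureTheory Filter Real


private lemma integral_Iio_fct {f f' : ℝ → ℂ} {a : ℝ} {m : ℂ}
    (hcont : ContinuousWithinAt f (Set.Iic a) a)
    (hderiv : ∀ x ∈ Set.Iio a, HasDerivAt f (f' x) x)
    (f'int : IntegrableOn f' (Set.Iio a))
    (hf : Tendsto f atBot (nhds m)) :
    ∫ x in Set.Iio a, f' x = f a - m := by
  have A : MeasurableEmbedding (fun x : ℝ => -x) :=
    (Homeomorph.neg ℝ).isClosedEmbedding.measurableEmbedding
  have hpre : (fun x : ℝ => -x) ⁻¹' (Set.Iio a) = Set.Ioi (-a) := by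
    ext x; simp [neg_lt]
  have hint : IntegrableOn (fun x => -f' (-x)) (Set.Ioi (-a)) := by
    have h1 : IntegrableOn (fun x => f' (-x)) (Set.Ioi (-a)) := by
      rw [← Measure.map_neg_eq_self (volume : Measure ℝ)] at f'int
      have := A.integrableOn_map_iff.mp f'int
      rwa [hpre] at this
    exact h1.neg
  have key : ∫ x in Set.Ioi (-a), (fun x => -f' (-x)) x = m - (fun x => f (-x)) (-a) := by
    apply integral_Ioi_of_hasDerivAt_of_tendsto (f := fun x => f (-x))
    · have hc : ContinuousWithinAt f (Set.Iic a) (-(-a)) := by rwa [neg_neg]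
      have hn : ContinuousWithinAt (fun x : ℝ => -x) (Set.Ici (-a)) (-a) :=
        continuous_neg.continuousWithinAt
      exact hc.comp hn (fun x hx => by simp at hx ⊢; linarith)
    · intro x hx
      have hx' : -x ∈ Set.Iio a := by simp at hx ⊢; linarith
      have := (hderiv _ hx').scomp x (hasDerivAt_neg x)
      simpa [Function.comp_def] using this
    · exact hint
    · exact hf.comp tendsto_neg_atTop_atBot
  simp only [neg_neg] at key
  have h2 : ∫ x in Set.Ioi (-a), (fun x => -f' (-x)) x = - ∫ x in Set.Iio a, f' x := by
    rw [integral_neg]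
    congr 1
    rw [integral_comp_neg_Ioi, neg_neg, integral_Iic_eq_integral_Iio]
  rw [h2] at key
  linear_combination -key

section Aux

variable (φ : SchwartzMap ℝ ℂ)

private noncomputable def ψf : SchwartzMap ℝ ℂ := SchwartzMap.derivCLM ℝ ℂ φ

private lemma ψf_apply (x : ℝ) : ψf φ x = deriv φ x := SchwartzMap.derivCLM_apply (𝕜 := ℝ) (f := φ) (x := x)

private lemma measSet (ε : ℝ) : MeasurableSet {x : ℝ | ε < |x|} :=
  measurableSet_lt measurable_const (continuous_abs.measurable)

private lemma set_eq (ε : ℝ) : {x : ℝ | ε < |x|} = Set.Iio (-ε) ∪ Set.Ioi ε := by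
  ext x
  simp only [Set.mem_setOf_eq, lt_abs, Set.mem_union, Set.mem_Iio, Set.mem_Ioi]
  constructor
  · rintro (h | h)
    · exact Or.inr h
    · exact Or.inl (by linarith)
  · rintro (h | h)
    · exact Or.inr (by linarith)
    · exact Or.inl h

private lemma int_div (f : SchwartzMap ℝ ℂ) {ε : ℝ} (hε : 0 < ε) :
    IntegrableOn (fun x : ℝ => f x / (x : ℂ)) {x : ℝ | ε < |x|} := by
  apply Integrable.mono' ((f.integrable (μ := volume)).norm.const_mul ε⁻¹).restrict
  · exact (((f.continuous.measurable).div Complex.measurable_ofReal)).aestronglyMeasurable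
  · rw [ae_restrict_iff' (measSet ε)]
    filter_upwards with x hx
    have hx' : ε < |x| := hx
    rw [norm_div, Complex.norm_real, Real.norm_eq_abs,
      div_le_iff₀ (lt_trans hε hx')]
    calc ‖f x‖ = 1 * ‖f x‖ := (one_mul _).symm
    _ ≤ (ε⁻¹ * |x|) * ‖f x‖ := by
        apply mul_le_mul_of_nonneg_right _ (norm_nonneg _)
        rw [← div_eq_inv_mul, le_div_iff₀ hε, one_mul]
        exact hx'.le
    _ = ε⁻¹ * ‖f x‖ * |x| := by ring

private lemma int_div2 {ε : ℝ} (hε : 0 < ε) :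
    IntegrableOn (fun x : ℝ => φ x / (x : ℂ) ^ 2) {x : ℝ | ε < |x|} := by
  apply Integrable.mono' ((φ.integrable (μ := volume)).norm.const_mul (ε ^ 2)⁻¹).restrict
  · exact (((φ.continuous.measurable).div
      (Complex.measurable_ofReal.pow_const 2))).aestronglyMeasurable
  · rw [ae_restrict_iff' (measSet ε)]
    filter_upwards with x hx
    have hx' : ε < |x| := hx
    have hx2 : ε ^ 2 < |x| ^ 2 := by
      apply pow_lt_pow_left₀ hx' hε.le
      · norm_num
    rw [norm_div, norm_pow, Complex.norm_real, Real.norm_eq_abs,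
      div_le_iff₀ (lt_trans (by positivity) hx2)]
    calc ‖φ x‖ = 1 * ‖φ x‖ := (one_mul _).symm
    _ ≤ ((ε ^ 2)⁻¹ * |x| ^ 2) * ‖φ x‖ := by
        apply mul_le_mul_of_nonneg_right _ (norm_nonneg _)
        rw [← div_eq_inv_mul, le_div_iff₀ (by positivity), one_mul]
        exact hx2.le
    _ = (ε ^ 2)⁻¹ * ‖φ x‖ * |x| ^ 2 := by ring

private lemma ind_fun (c : ℂ) :
    (fun x : ℝ => (Set.Icc (-1:ℝ) 1).indicator (fun _ => c) x / (x : ℂ))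
      = (Set.Icc (-1:ℝ) 1).indicator (fun x : ℝ => c / (x : ℂ)) := by
  funext x
  by_cases hx : x ∈ Set.Icc (-1:ℝ) 1
  · simp [Set.indicator_of_mem hx]
  · simp [Set.indicator_of_notMem hx]

private lemma inter_eq {ε : ℝ} (hε : 0 < ε) :
    {x : ℝ | ε < |x|} ∩ Set.Icc (-1:ℝ) 1 = Set.Ico (-1:ℝ) (-ε) ∪ Set.Ioc ε 1 := by
  ext x
  simp only [Set.mem_inter_iff, Set.mem_setOf_eq, lt_abs, Set.mem_Icc, Set.mem_union,
    Set.mem_Ico, Set.mem_Ioc]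
  constructor
  · rintro ⟨h | h, h1, h2⟩
    · exact Or.inr ⟨h, h2⟩
    · exact Or.inl ⟨h1, by linarith⟩
  · rintro (⟨h1, h2⟩ | ⟨h1, h2⟩)
    · exact ⟨Or.inr (by linarith), h1, by linarith⟩
    · exact ⟨Or.inl h1, by linarith, h2⟩

private lemma cdiv_int (c : ℂ) {a b : ℝ} (h : (0:ℝ) ∉ Set.Icc a b) :
    IntegrableOn (fun x : ℝ => c / (x : ℂ)) (Set.Icc a b) := by
  apply ContinuousOn.integrableOn_Icc
  apply continuousOn_const.div (Complex.continuous_ofReal.continuousOn)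
  intro x hx
  exact_mod_cast fun h0 => h (by rwa [show x = 0 from by exact_mod_cast h0] at hx)

private lemma ind_integrableOn (c : ℂ) {ε : ℝ} (hε : 0 < ε) :
    IntegrableOn (fun x : ℝ => (Set.Icc (-1:ℝ) 1).indicator (fun _ => c) x / (x : ℂ))
      {x : ℝ | ε < |x|} := by
  rw [ind_fun]
  unfold IntegrableOn
  rw [integrable_indicator_iff measurableSet_Icc]
  have h1 : IntegrableOn (fun x : ℝ => c / (x : ℂ))
      (Set.Ico (-1:ℝ) (-ε) ∪ Set.Ioc ε 1) := by
    apply IntegrableOn.union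
    · exact (cdiv_int c (by intro hmem; rw [Set.mem_Icc] at hmem; linarith [hmem.2])).mono_set Set.Ico_subset_Icc_self
    · exact (cdiv_int c (by simp [hε])).mono_set Set.Ioc_subset_Icc_self
  unfold IntegrableOn
  rw [Measure.restrict_restrict measurableSet_Icc, Set.inter_comm, inter_eq hε]
  exact h1

private lemma ind_integral_zero (c : ℂ) {ε : ℝ} (hε : 0 < ε) (hε1 : ε < 1) :
    ∫ x in {x : ℝ | ε < |x|},
      (Set.Icc (-1:ℝ) 1).indicator (fun _ => c) x / (x : ℂ) = 0 := by
  rw [ind_fun, setIntegral_indicator measurableSet_Icc, inter_eq hε]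
  have hdisj : Disjoint (Set.Ico (-1:ℝ) (-ε)) (Set.Ioc ε 1) := by
    apply Set.disjoint_left.mpr
    rintro x ⟨_, h2⟩ ⟨h3, _⟩
    linarith
  have i1 : IntegrableOn (fun x : ℝ => c / (x : ℂ)) (Set.Ico (-1:ℝ) (-ε)) :=
    (cdiv_int c (by intro hmem; rw [Set.mem_Icc] at hmem; linarith [hmem.2])).mono_set Set.Ico_subset_Icc_self
  have i2 : IntegrableOn (fun x : ℝ => c / (x : ℂ)) (Set.Ioc ε 1) :=
    (cdiv_int c (by simp [hε])).mono_set Set.Ioc_subset_Icc_self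
  rw [setIntegral_union hdisj measurableSet_Ioc i1 i2]
  have hsmul : ∀ x : ℝ, c / (x : ℂ) = x⁻¹ • c := by
    intro x
    rw [Complex.real_smul, Complex.ofReal_inv, inv_mul_eq_div]
  simp_rw [hsmul]
  rw [integral_Ico_eq_integral_Ioo, ← integral_Ioc_eq_integral_Ioo,
    ← intervalIntegral.integral_of_le (by linarith : (-1:ℝ) ≤ -ε),
    ← intervalIntegral.integral_of_le (by linarith : ε ≤ (1:ℝ)),
    intervalIntegral.integral_smul_const, intervalIntegral.integral_smul_const,
    integral_inv (by rw [Set.uIcc_of_le (by linarith)]; intro hmem; rw [Set.mem_Icc] at hmem; linarith [hmem.2]),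
    integral_inv_of_pos hε one_pos]
  rw [← add_smul]
  have : Real.log (-ε / -1) + Real.log (1 / ε) = 0 := by
    rw [neg_div_neg_eq, div_one, one_div, Real.log_inv]
    ring
  rw [this, zero_smul]

private lemma sup_bound (f : SchwartzMap ℝ ℂ) : ∃ C : ℝ, 0 ≤ C ∧ ∀ x : ℝ, ‖f x‖ ≤ C := by
  obtain ⟨C, hCpos, hC⟩ := f.decay 0 0
  refine ⟨C, hCpos.le, fun x => ?_⟩
  have := hC x
  simpa [norm_iteratedFDeriv_zero] using this

private lemma lip_bound (f : SchwartzMap ℝ ℂ) :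
    ∃ C : ℝ, 0 ≤ C ∧ ∀ x : ℝ, ‖f x - f 0‖ ≤ C * |x| := by
  obtain ⟨C, hC0, hC⟩ := sup_bound (SchwartzMap.derivCLM ℝ ℂ f)
  refine ⟨C, hC0, fun x => ?_⟩
  have key := Convex.norm_image_sub_le_of_norm_hasDerivWithin_le
    (f := fun y : ℝ => f y) (f' := fun y : ℝ => deriv f y) (s := Set.univ) (C := C)
    (fun y _ => (f.differentiableAt.hasDerivAt).hasDerivWithinAt)
    (fun y _ => by
      have := hC y
      rwa [SchwartzMap.derivCLM_apply] at this)
    convex_univ (Set.mem_univ 0) (Set.mem_univ x)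
  simpa using key

private lemma tendsto_top : Tendsto (fun x : ℝ => φ x / (x : ℂ)) atTop (nhds 0) := by
  obtain ⟨C, hC0, hC⟩ := sup_bound φ
  apply squeeze_zero_norm' (a := fun x : ℝ => C * x⁻¹)
  · filter_upwards [eventually_ge_atTop (1:ℝ)] with x hx
    rw [norm_div, Complex.norm_real, Real.norm_eq_abs, abs_of_pos (by linarith),
      div_eq_mul_inv]
    exact mul_le_mul_of_nonneg_right (hC x) (by positivity)
  · simpa using tendsto_inv_atTop_zero.const_mul C

private lemma tendsto_bot : Tendsto (fun x : ℝ => φ x / (x : ℂ)) atBot (nhds 0) := by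
  obtain ⟨C, hC0, hC⟩ := sup_bound φ
  apply squeeze_zero_norm' (a := fun x : ℝ => C * |x|⁻¹)
  · filter_upwards [eventually_le_atBot (-1:ℝ)] with x hx
    rw [norm_div, Complex.norm_real, Real.norm_eq_abs, div_eq_mul_inv]
    exact mul_le_mul_of_nonneg_right (hC x) (by positivity)
  · have h1 : Tendsto (fun x : ℝ => |x|⁻¹) atBot (nhds 0) :=
      Tendsto.inv_tendsto_atTop tendsto_abs_atBot_atTop
    simpa using h1.const_mul C

private lemma ibp {ε : ℝ} (hε : 0 < ε) :
    ∫ x in {x : ℝ | ε < |x|}, φ x / (x : ℂ) ^ 2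
      = (∫ x in {x : ℝ | ε < |x|}, ψf φ x / (x : ℂ)) + (φ ε + φ (-ε)) / (ε : ℂ) := by
  have hεC : (ε : ℂ) ≠ 0 := by exact_mod_cast hε.ne'
  have hIψ := int_div (ψf φ) hε
  have hIφ2 := int_div2 φ hε
  set F' : ℝ → ℂ := fun x => ψf φ x / (x : ℂ) - φ x / (x : ℂ) ^ 2 with hF'
  have hF'int : IntegrableOn F' {x : ℝ | ε < |x|} := by
    exact hIψ.sub hIφ2
  have hderivF : ∀ x : ℝ, x ≠ 0 →
      HasDerivAt (fun y : ℝ => φ y / (y : ℂ))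
        (ψf φ x / (x : ℂ) - φ x / (x : ℂ) ^ 2) x := by
    intro x hx
    have hxC : (x : ℂ) ≠ 0 := by exact_mod_cast hx
    have h1 : HasDerivAt (fun y : ℝ => (y : ℂ)) 1 x := by
      exact Complex.ofRealCLM.hasDerivAt (x := x)
    have h2 : HasDerivAt (fun y : ℝ => φ y) (ψf φ x) x := by
      rw [ψf_apply]; exact φ.differentiableAt.hasDerivAt
    have := h2.div h1 hxC
    refine this.congr_deriv ?_
    rw [sub_div, mul_one, pow_two, mul_div_mul_right _ _ hxC]
  have hsub1 : Set.Ioi ε ⊆ {x : ℝ | ε < |x|} := fun x hx => by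
    simp only [Set.mem_Ioi] at hx
    simp only [Set.mem_setOf_eq]
    rw [abs_of_pos (lt_trans hε hx)]; exact hx
  have hsub2 : Set.Iio (-ε) ⊆ {x : ℝ | ε < |x|} := fun x hx => by
    simp only [Set.mem_Iio] at hx
    simp only [Set.mem_setOf_eq]
    rw [abs_of_neg (by linarith)]; linarith
  have e2 : ∫ x in Set.Ioi ε, F' x = 0 - φ ε / (ε : ℂ) := by
    apply integral_Ioi_of_hasDerivAt_of_tendsto (f := fun x : ℝ => φ x / (x : ℂ))
    · exact ((φ.continuous.continuousAt).div
        (Complex.continuous_ofReal.continuousAt) hεC).continuousWithinAt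
    · exact fun x hx => hderivF x (by simp only [Set.mem_Ioi] at hx; linarith)
    · exact hF'int.mono_set hsub1
    · exact tendsto_top φ
  have e1 : ∫ x in Set.Iio (-ε), F' x = φ (-ε) / ((-ε : ℝ) : ℂ) - 0 := by
    apply integral_Iio_fct (f := fun x : ℝ => φ x / (x : ℂ))
    · apply ContinuousAt.continuousWithinAt
      apply (φ.continuous.continuousAt).div (Complex.continuous_ofReal.continuousAt)
      simpa using hεC
    · exact fun x hx => hderivF x (by simp only [Set.mem_Iio] at hx; intro h; rw [h] at hx; linarith)
    · exact hF'int.mono_set hsub2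
    · exact tendsto_bot φ
  have hdisj : Disjoint (Set.Iio (-ε)) (Set.Ioi ε) :=
    Set.disjoint_left.mpr (fun x hx hx' => by
      simp only [Set.mem_Iio] at hx; simp only [Set.mem_Ioi] at hx'; linarith)
  have e3 : ∫ x in {x : ℝ | ε < |x|}, F' x
        = φ (-ε) / ((-ε : ℝ) : ℂ) - 0 + (0 - φ ε / (ε : ℂ)) := by
    rw [set_eq ε, setIntegral_union hdisj measurableSet_Ioi
      (hF'int.mono_set hsub2) (hF'int.mono_set hsub1), e1, e2]
  have e4 : ∫ x in {x : ℝ | ε < |x|}, F' x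
        = (∫ x in {x : ℝ | ε < |x|}, ψf φ x / (x : ℂ))
          - ∫ x in {x : ℝ | ε < |x|}, φ x / (x : ℂ) ^ 2 :=
    integral_sub hIψ hIφ2
  have h := e4.symm.trans e3
  rw [Complex.ofReal_neg, div_neg] at h
  have hsplit : (φ ε + φ (-ε)) / (ε : ℂ) = φ ε / (ε : ℂ) + φ (-ε) / (ε : ℂ) := by
    rw [add_div]
  rw [hsplit]
  linear_combination -h

end Aux

/-- Distributional derivative of `Vp(1/x)` equals minus `Pf(1/x²)`: for every Schwartz `φ`,
the finite-part limit `lim_{ε→0⁺} (∫_{|x|>ε} φ(x)/x² dx − 2φ(0)/ε)` exists and equals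
`lim_{ε→0⁺} ∫_{|x|>ε} φ′(x)/x dx`. -/
theorem deriv_pv_eq_neg_pf (φ : SchwartzMap ℝ ℂ) :
    ∃ L : ℂ,
      Tendsto
        (fun ε : ℝ => (∫ x in {x : ℝ | ε < |x|}, φ x / (x : ℂ) ^ 2) - 2 * φ 0 / (ε : ℂ))
        (nhdsWithin 0 (Set.Ioi 0)) (nhds L) ∧
      Tendsto
        (fun ε : ℝ => ∫ x in {x : ℝ | ε < |x|}, deriv (fun y : ℝ => φ y) x / (x : ℂ))
        (nhdsWithin 0 (Set.Ioi 0)) (nhds L) := by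
  obtain ⟨C, hC0, hCbd⟩ := lip_bound (ψf φ)
  set c : ℂ := ψf φ 0 with hc
  set g : ℝ → ℂ :=
    fun x => (ψf φ x - (Set.Icc (-1:ℝ) 1).indicator (fun _ => c) x) / (x : ℂ) with hgdef
  have hgmeas : Measurable g :=
    ((ψf φ).continuous.measurable.sub
      (measurable_const.indicator measurableSet_Icc)).div Complex.measurable_ofReal
  have hgbd : ∀ x ∈ Set.Icc (-1:ℝ) 1, ‖g x‖ ≤ C := by
    intro x hx
    by_cases hx0 : x = 0
    · subst hx0
      simp only [hgdef, Complex.ofReal_zero, div_zero, norm_zero]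
      exact hC0
    · simp only [hgdef, Set.indicator_of_mem hx]
      rw [norm_div, Complex.norm_real, Real.norm_eq_abs,
        div_le_iff₀ (abs_pos.mpr hx0)]
      exact hCbd x
  have hgint : Integrable g := by
    have h1 : IntegrableOn g (Set.Icc (-1:ℝ) 1) := by
      apply Integrable.mono' ((integrableOn_const_iff).mpr (Or.inr measure_Icc_lt_top))
        hgmeas.aestronglyMeasurable
      rw [ae_restrict_iff' measurableSet_Icc]
      exact ae_of_all _ hgbd
    have h2 : IntegrableOn g (Set.Icc (-1:ℝ) 1)ᶜ := by
      apply Integrable.mono' ((ψf φ).integrable (μ := volume)).norm.restrict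
        hgmeas.aestronglyMeasurable
      rw [ae_restrict_iff' measurableSet_Icc.compl]
      apply ae_of_all
      intro x hx
      rw [Set.mem_compl_iff, Set.mem_Icc, not_and_or] at hx
      have hx1 : 1 ≤ |x| := by
        rcases hx with h | h
        · push_neg at h; rw [abs_of_neg (by linarith)]; linarith
        · push_neg at h; rw [abs_of_pos (by linarith)]; linarith
      have hxmem : x ∉ Set.Icc (-1:ℝ) 1 := by
        rw [Set.mem_Icc, not_and_or]; exact hx
      simp only [hgdef, Set.indicator_of_notMem hxmem, sub_zero]
      rw [norm_div, Complex.norm_real, Real.norm_eq_abs]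
      exact div_le_self (norm_nonneg _) hx1
    have h3 := h1.union h2
    rwa [Set.union_compl_self, integrableOn_univ] at h3
  set L : ℂ := ∫ x, g x with hL
  have hdecomp : ∀ ε : ℝ, 0 < ε → ε < 1 →
      (∫ x in {x : ℝ | ε < |x|}, ψf φ x / (x : ℂ))
        = ∫ x in {x : ℝ | ε < |x|}, g x := by
    intro ε hε hε1
    have key : ∀ x : ℝ, ψf φ x / (x : ℂ)
        = g x + (Set.Icc (-1:ℝ) 1).indicator (fun _ => c) x / (x : ℂ) := by
      intro x
      simp only [hgdef]
      rw [← add_div, sub_add_cancel]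
    simp only [key]
    rw [integral_add hgint.restrict (ind_integrableOn c hε),
      ind_integral_zero c hε hε1, add_zero]
  have hsplit : ∀ ε : ℝ, 0 < ε →
      ∫ x in {x : ℝ | ε < |x|}, g x = L - ∫ x in Set.Icc (-ε) ε, g x := by
    intro ε hε
    have hcompl : {x : ℝ | ε < |x|}ᶜ = Set.Icc (-ε) ε := by
      ext x; simp [not_lt, abs_le]
    have h := integral_add_compl (measSet ε) hgint
    rw [hcompl] at h
    linear_combination h
  have hsmall : Tendsto (fun ε : ℝ => ∫ x in Set.Icc (-ε) ε, g x)
      (nhdsWithin 0 (Set.Ioi 0)) (nhds 0) := by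
    apply squeeze_zero_norm' (a := fun ε : ℝ => C * (2 * ε))
    · filter_upwards [Ioo_mem_nhdsGT_of_mem (Set.left_mem_Ico.mpr one_pos)] with ε hε
      have hb := norm_setIntegral_le_of_norm_le_const (μ := volume)
        (s := Set.Icc (-ε) ε) (C := C) measure_Icc_lt_top
        (fun x hx => hgbd x (Set.Icc_subset_Icc (by linarith [hε.2]) (by linarith [hε.2]) hx))
      calc ‖∫ x in Set.Icc (-ε) ε, g x‖ ≤ C * (volume (Set.Icc (-ε) ε)).toReal := hb
      _ = C * (2 * ε) := by
          rw [Real.volume_Icc, ENNReal.toReal_ofReal (by linarith [hε.1])]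
          ring
    · have h : Tendsto (fun ε : ℝ => C * (2 * ε)) (nhds 0) (nhds (C * (2 * 0))) :=
        (continuous_const.mul (continuous_const.mul continuous_id)).tendsto 0
      simp only [mul_zero] at h
      exact h.mono_left nhdsWithin_le_nhds
  have hgtends : Tendsto (fun ε : ℝ => ∫ x in {x : ℝ | ε < |x|}, g x)
      (nhdsWithin 0 (Set.Ioi 0)) (nhds L) := by
    have h0 : Tendsto (fun ε : ℝ => L - ∫ x in Set.Icc (-ε) ε, g x)
        (nhdsWithin 0 (Set.Ioi 0)) (nhds L) := by
      simpa using tendsto_const_nhds.sub hsmall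
    apply Tendsto.congr' _ h0
    filter_upwards [self_mem_nhdsWithin] with ε hε
    exact (hsplit ε hε).symm
  have hF : Tendsto (fun ε : ℝ => ∫ x in {x : ℝ | ε < |x|}, ψf φ x / (x : ℂ))
      (nhdsWithin 0 (Set.Ioi 0)) (nhds L) := by
    apply Tendsto.congr' _ hgtends
    filter_upwards [Ioo_mem_nhdsGT_of_mem (Set.left_mem_Ico.mpr one_pos)] with ε hε
    exact (hdecomp ε hε.1 hε.2).symm
  have hslope_eq : ∀ t : ℝ, slope (⇑φ) 0 t = (φ t - φ 0) / (t : ℂ) := by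
    intro t
    show (t - 0)⁻¹ • (φ t -ᵥ φ 0) = _
    rw [vsub_eq_sub, sub_zero, Complex.real_smul, Complex.ofReal_inv, inv_mul_eq_div]
  have hd := hasDerivAt_iff_tendsto_slope.mp (φ.differentiableAt (x := (0:ℝ))).hasDerivAt
  have hdd := Tendsto.congr hslope_eq hd
  have h1 : Tendsto (fun ε : ℝ => (φ ε - φ 0) / (ε : ℂ))
      (nhdsWithin 0 (Set.Ioi 0)) (nhds (deriv φ 0)) := by
    apply hdd.mono_left
    apply nhdsWithin_mono 0
    intro x hx
    exact ne_of_gt hx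
  have hneg : Tendsto (fun ε : ℝ => -ε) (nhdsWithin 0 (Set.Ioi 0))
      (nhdsWithin (0:ℝ) {(0:ℝ)}ᶜ) := by
    apply tendsto_nhdsWithin_of_tendsto_nhds_of_eventually_within
    · have := (continuous_neg.tendsto (0:ℝ)).mono_left
        (nhdsWithin_le_nhds (s := Set.Ioi (0:ℝ)))
      simpa using this
    · filter_upwards [self_mem_nhdsWithin] with ε hε
      simp only [Set.mem_compl_iff, Set.mem_singleton_iff]
      exact neg_ne_zero.mpr (ne_of_gt hε)
  have h2 : Tendsto (fun ε : ℝ => (φ (-ε) - φ 0) / ((-ε : ℝ) : ℂ))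
      (nhdsWithin 0 (Set.Ioi 0)) (nhds (deriv φ 0)) := hdd.comp hneg
  have hsum : Tendsto
      (fun ε : ℝ => (φ ε - φ 0) / (ε : ℂ) - (φ (-ε) - φ 0) / ((-ε : ℝ) : ℂ))
      (nhdsWithin 0 (Set.Ioi 0)) (nhds 0) := by
    simpa using h1.sub h2
  have hE : Tendsto (fun ε : ℝ => (φ ε + φ (-ε) - 2 * φ 0) / (ε : ℂ))
      (nhdsWithin 0 (Set.Ioi 0)) (nhds 0) := by
    apply Tendsto.congr' _ hsum
    apply Eventually.of_forall
    intro ε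
    show (φ ε - φ 0) / (ε : ℂ) - (φ (-ε) - φ 0) / ((-ε : ℝ) : ℂ)
      = (φ ε + φ (-ε) - 2 * φ 0) / (ε : ℂ)
    rw [Complex.ofReal_neg, div_neg, sub_neg_eq_add, ← add_div]
    congr 1
    ring
  refine ⟨L, ?_, ?_⟩
  · have hFE : Tendsto
        (fun ε : ℝ => (∫ x in {x : ℝ | ε < |x|}, ψf φ x / (x : ℂ))
          + (φ ε + φ (-ε) - 2 * φ 0) / (ε : ℂ))
        (nhdsWithin 0 (Set.Ioi 0)) (nhds L) := by
      simpa using hF.add hE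
    apply Tendsto.congr' _ hFE
    filter_upwards [self_mem_nhdsWithin] with ε hε
    show (∫ x in {x : ℝ | ε < |x|}, ψf φ x / (x : ℂ))
        + (φ ε + φ (-ε) - 2 * φ 0) / (ε : ℂ)
      = (∫ x in {x : ℝ | ε < |x|}, φ x / (x : ℂ) ^ 2) - 2 * φ 0 / (ε : ℂ)
    rw [ibp φ hε]
    ring
  · simpa only [ψf_apply] using hF
end

section
/- Principal-value Fourier integral of a simple non-real pole: Let z ∈ ℂ with Im z ≠ 0 and let k ∈ ℝ with k ≠ 0. Then the symmetric limit lim_{R→∞} ∫_{−R}^{R} e^{−ikx}/(x − z) dx exists and equals 2πi·e^{−ikz} if Im z > 0 and k < 0, equals −2πi·e^{−ikz} if Im z < 0 and k > 0, and equals 0 otherwise. -/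
open MeasureTheory Filter Real
open scoped Topology

section Helpers

/-- horizontal edge log integral -/
lemma horiz_log (z : ℂ) (y a b : ℝ) (hy : y ≠ z.im) :
    ∫ x in a..b, ((x : ℂ) + (y : ℂ) * Complex.I - z)⁻¹
      = Complex.log ((b : ℂ) + (y : ℂ) * Complex.I - z)
        - Complex.log ((a : ℂ) + (y : ℂ) * Complex.I - z) := by
  have hne : ∀ x : ℝ, ((x : ℂ) + (y : ℂ) * Complex.I - z) ≠ 0 := by
    intro x h
    apply hy
    have := congrArg Complex.im h
    simp [Complex.add_im, Complex.sub_im] at this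
    linarith
  have hmem : ∀ x : ℝ, ((x : ℂ) + (y : ℂ) * Complex.I - z) ∈ Complex.slitPlane := by
    intro x
    rw [Complex.mem_slitPlane_iff]
    right
    simp [sub_eq_zero]
    intro h; exact hy h
  have key : ∀ x : ℝ, HasDerivAt (fun t : ℝ => Complex.log ((t : ℂ) + (y : ℂ) * Complex.I - z))
      (((x : ℂ) + (y : ℂ) * Complex.I - z)⁻¹) x := by
    intro x
    have h1 : HasDerivAt (fun w : ℂ => w + ((y : ℂ) * Complex.I - z))
        1 (x : ℂ) := (hasDerivAt_id _).add_const _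
    have h1' : HasDerivAt (fun w : ℂ => w + ((y : ℂ) * Complex.I - z))
        1 (x : ℂ) := h1
    have h2 := (Complex.hasDerivAt_log (by have := hmem x; rwa [add_sub_assoc] at this)).comp (x : ℂ) h1'
    have h3 := h2.comp_ofReal
    simp only [Function.comp, mul_one] at h3
    convert h3 using 2 <;> ring
  refine intervalIntegral.integral_eq_sub_of_hasDerivAt (fun x _ => key x) ?_
  apply Continuous.intervalIntegrable
  exact (Continuous.add (Complex.continuous_ofReal) continuous_const |>.sub continuous_const).inv₀ hne

/-- right vertical edge: z.re < c -/
lemma vert_log_right (z : ℂ) (c a b : ℝ) (hc : z.re < c) :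
    Complex.I * ∫ y in a..b, ((c : ℂ) + (y : ℂ) * Complex.I - z)⁻¹
      = Complex.log ((c : ℂ) + (b : ℂ) * Complex.I - z)
        - Complex.log ((c : ℂ) + (a : ℂ) * Complex.I - z) := by
  have hmem : ∀ y : ℝ, ((c : ℂ) + (y : ℂ) * Complex.I - z) ∈ Complex.slitPlane := by
    intro y
    rw [Complex.mem_slitPlane_iff]
    left
    simp
    linarith
  have hne : ∀ y : ℝ, ((c : ℂ) + (y : ℂ) * Complex.I - z) ≠ 0 :=
    fun y => Complex.slitPlane_ne_zero (hmem y)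
  rw [← intervalIntegral.integral_const_mul]
  have key : ∀ y : ℝ, HasDerivAt (fun t : ℝ => Complex.log ((c : ℂ) + (t : ℂ) * Complex.I - z))
      (Complex.I * ((c : ℂ) + (y : ℂ) * Complex.I - z)⁻¹) y := by
    intro y
    have h1 : HasDerivAt (fun w : ℂ => (c : ℂ) + w * Complex.I - z)
        Complex.I (y : ℂ) := by
      simpa using (((hasDerivAt_id ((y : ℂ))).mul_const Complex.I).const_add (c : ℂ)).sub_const z
    have h2 := (Complex.hasDerivAt_log (hmem y)).comp (y : ℂ) h1
    have h3 := h2.comp_ofReal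
    simp only [Function.comp] at h3
    convert h3 using 1
    ring
  refine intervalIntegral.integral_eq_sub_of_hasDerivAt (fun y _ => key y) ?_
  apply Continuous.intervalIntegrable
  exact continuous_const.mul ((continuous_const.add ((Complex.continuous_ofReal).mul continuous_const) |>.sub continuous_const).inv₀ hne)

/-- left vertical edge: c < z.re -/
lemma vert_log_left (z : ℂ) (c a b : ℝ) (hc : c < z.re) :
    Complex.I * ∫ y in a..b, ((c : ℂ) + (y : ℂ) * Complex.I - z)⁻¹
      = Complex.log (z - (c : ℂ) - (b : ℂ) * Complex.I)
        - Complex.log (z - (c : ℂ) - (a : ℂ) * Complex.I) := by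
  have hmem : ∀ y : ℝ, (z - (c : ℂ) - (y : ℂ) * Complex.I) ∈ Complex.slitPlane := by
    intro y
    rw [Complex.mem_slitPlane_iff]
    left
    simp
    linarith
  have hne : ∀ y : ℝ, ((c : ℂ) + (y : ℂ) * Complex.I - z) ≠ 0 := by
    intro y h
    have : (z - (c : ℂ) - (y : ℂ) * Complex.I) = 0 := by
      rw [← neg_eq_zero]; rw [← h]; ring
    exact Complex.slitPlane_ne_zero (hmem y) this
  rw [← intervalIntegral.integral_const_mul]
  have key : ∀ y : ℝ, HasDerivAt (fun t : ℝ => Complex.log (z - (c : ℂ) - (t : ℂ) * Complex.I))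
      (Complex.I * ((c : ℂ) + (y : ℂ) * Complex.I - z)⁻¹) y := by
    intro y
    have h1 : HasDerivAt (fun w : ℂ => z - (c : ℂ) - w * Complex.I)
        (-Complex.I) (y : ℂ) := by
      simpa using (((hasDerivAt_id ((y : ℂ))).mul_const Complex.I).const_sub (z - (c : ℂ)))
    have h2 := (Complex.hasDerivAt_log (hmem y)).comp (y : ℂ) h1
    have h3 := h2.comp_ofReal
    simp only [Function.comp] at h3
    convert h3 using 1
    have hw : ((c:ℂ) + (y:ℂ)*Complex.I - z) = -(z - (c:ℂ) - (y:ℂ)*Complex.I) := by ring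
    rw [hw, inv_neg]; ring
  refine intervalIntegral.integral_eq_sub_of_hasDerivAt (fun y _ => key y) ?_
  apply Continuous.intervalIntegrable
  exact continuous_const.mul ((continuous_const.add ((Complex.continuous_ofReal).mul continuous_const) |>.sub continuous_const).inv₀ hne)

lemma log_neg_im_pos {w : ℂ} (h : 0 < w.im) :
    Complex.log (-w) = Complex.log w - (π : ℂ) * Complex.I := by
  unfold Complex.log
  rw [norm_neg, Complex.arg_neg_eq_arg_sub_pi_of_im_pos h]
  push_cast
  ring

lemma log_neg_im_neg {w : ℂ} (h : w.im < 0) :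
    Complex.log (-w) = Complex.log w + (π : ℂ) * Complex.I := by
  unfold Complex.log
  rw [norm_neg, Complex.arg_neg_eq_arg_add_pi_of_im_neg h]
  push_cast
  ring

/-- Rectangle boundary integral of `(w - z)⁻¹` for `z` inside: equals `2πi`. -/
lemma rect_inv (z : ℂ) (h0 : 0 < z.im) (R T : ℝ) (hR1 : -R < z.re) (hR2 : z.re < R)
    (hT : z.im < T) :
    (∫ x in (-R)..R, ((x : ℂ) + ((0:ℝ) : ℂ) * Complex.I - z)⁻¹)
      - (∫ x in (-R)..R, ((x : ℂ) + (T : ℂ) * Complex.I - z)⁻¹)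
      + Complex.I * (∫ y in (0:ℝ)..T, ((R : ℂ) + (y : ℂ) * Complex.I - z)⁻¹)
      - Complex.I * (∫ y in (0:ℝ)..T, (((-R : ℝ) : ℂ) + (y : ℂ) * Complex.I - z)⁻¹)
      = 2 * (π : ℂ) * Complex.I := by
  rw [horiz_log z 0 (-R) R h0.ne, horiz_log z T (-R) R (by intro h; rw [← h] at hT; linarith),
    vert_log_right z R 0 T hR2, vert_log_left z (-R) 0 T (by linarith)]
  have e1 : (((-R : ℝ)) : ℂ) + ((0:ℝ) : ℂ) * Complex.I - z = -(z + (R:ℂ)) := by push_cast; ring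
  have e2 : (((-R : ℝ)) : ℂ) + (T : ℂ) * Complex.I - z = -(z + (R:ℂ) - (T:ℂ) * Complex.I) := by
    push_cast; ring
  have e3 : z - (((-R : ℝ)) : ℂ) - (T : ℂ) * Complex.I = z + (R:ℂ) - (T:ℂ) * Complex.I := by
    push_cast; ring
  have e4 : z - (((-R : ℝ)) : ℂ) - ((0:ℝ) : ℂ) * Complex.I = z + (R:ℂ) := by push_cast; ring
  rw [e1, e2, e3, e4, log_neg_im_pos (by simpa using h0),
    log_neg_im_neg (by simp; linarith)]
  ring

lemma norm_exp_edge (k x y : ℝ) :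
    ‖Complex.exp (-Complex.I * (k : ℂ) * ((x : ℂ) + (y : ℂ) * Complex.I))‖ = Real.exp (k * y) := by
  have h : -Complex.I * (k : ℂ) * ((x : ℂ) + (y : ℂ) * Complex.I)
      = ((k * y : ℝ) : ℂ) + ((-(k * x) : ℝ) : ℂ) * Complex.I := by
    push_cast
    linear_combination (-((k:ℂ) * (y:ℂ))) * Complex.I_sq
  rw [h, Complex.norm_exp]
  congr 1
  simp

lemma integral_exp_mul (k a b : ℝ) (hk : k ≠ 0) :
    ∫ y in a..b, Real.exp (k * y) = (Real.exp (k * b) - Real.exp (k * a)) / k := by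
  have key : ∀ y : ℝ, HasDerivAt (fun t : ℝ => Real.exp (k * t) / k) (Real.exp (k * y)) y := by
    intro y
    have h1 : HasDerivAt (fun t : ℝ => k * t) k y := by
      simpa using (hasDerivAt_id y).const_mul k
    have h2 := (Real.hasDerivAt_exp (k * y)).comp y h1
    have h3 := h2.div_const k
    rw [mul_div_assoc, div_self hk, mul_one] at h3
    exact h3
  rw [intervalIntegral.integral_eq_sub_of_hasDerivAt (fun y _ => key y)
    (((Real.continuous_exp.comp (continuous_const.mul continuous_id)).intervalIntegrable _ _))]
  ring

/-- vertical edge bound -/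
lemma vert_edge_bound (z : ℂ) (k c a b D : ℝ) (hab : a ≤ b) (hD : 0 < D)
    (h : ∀ y ∈ Set.uIcc a b, D ≤ ‖(c : ℂ) + (y : ℂ) * Complex.I - z‖) :
    ‖∫ y in a..b, Complex.exp (-Complex.I * (k : ℂ) * ((c : ℂ) + (y : ℂ) * Complex.I))
        / ((c : ℂ) + (y : ℂ) * Complex.I - z)‖
      ≤ (∫ y in a..b, Real.exp (k * y)) / D := by
  have step : ‖∫ y in a..b, Complex.exp (-Complex.I * (k : ℂ) * ((c : ℂ) + (y : ℂ) * Complex.I))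
        / ((c : ℂ) + (y : ℂ) * Complex.I - z)‖
      ≤ |∫ y in a..b, Real.exp (k * y) * D⁻¹| := by
    apply intervalIntegral.norm_integral_le_abs_of_norm_le
    · apply MeasureTheory.ae_restrict_of_forall_mem measurableSet_uIoc
      intro y hy
      have hy' : y ∈ Set.uIcc a b := Set.uIoc_subset_uIcc hy
      rw [norm_div, norm_exp_edge]
      rw [div_eq_mul_inv]
      apply mul_le_mul_of_nonneg_left _ (Real.exp_pos _).le
      exact inv_anti₀ hD (h y hy')
    · exact ((Real.continuous_exp.comp (continuous_const.mul continuous_id)).mul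
        continuous_const).intervalIntegrable _ _
  refine step.trans ?_
  rw [intervalIntegral.integral_mul_const, abs_mul, div_eq_mul_inv]
  have h1 : 0 ≤ ∫ y in a..b, Real.exp (k * y) :=
    intervalIntegral.integral_nonneg hab (fun u _ => (Real.exp_pos _).le)
  rw [abs_of_nonneg h1, abs_of_nonneg (inv_nonneg.mpr hD.le)]

/-- horizontal edge bound -/
lemma horiz_edge_bound (z : ℂ) (k y0 a b D : ℝ) (hD : 0 < D)
    (h : ∀ x ∈ Set.uIcc a b, D ≤ ‖(x : ℂ) + (y0 : ℂ) * Complex.I - z‖) :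
    ‖∫ x in a..b, Complex.exp (-Complex.I * (k : ℂ) * ((x : ℂ) + (y0 : ℂ) * Complex.I))
        / ((x : ℂ) + (y0 : ℂ) * Complex.I - z)‖
      ≤ Real.exp (k * y0) / D * |b - a| := by
  apply intervalIntegral.norm_integral_le_of_norm_le_const
  intro x hx
  have hx' : x ∈ Set.uIcc a b := Set.uIoc_subset_uIcc hx
  rw [norm_div, norm_exp_edge]
  apply div_le_div₀ (Real.exp_pos _).le le_rfl hD
  exact h x hx'

lemma continuous_inv_horiz (z : ℂ) (y : ℝ) (hy : y ≠ z.im) :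
    Continuous fun x : ℝ => ((x : ℂ) + (y : ℂ) * Complex.I - z)⁻¹ := by
  apply Continuous.inv₀
  · continuity
  · intro x h
    apply hy
    have := congrArg Complex.im h
    simp [Complex.add_im, Complex.sub_im] at this
    linarith

lemma continuous_inv_vert (z : ℂ) (c : ℝ) (hc : c ≠ z.re) :
    Continuous fun y : ℝ => ((c : ℂ) + (y : ℂ) * Complex.I - z)⁻¹ := by
  apply Continuous.inv₀
  · continuity
  · intro y h
    apply hc
    have := congrArg Complex.re h
    simp [Complex.add_re, Complex.sub_re] at this
    linarith

end Helpers

section CaseB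

/-- The contour identity for `Im z > 0`. -/
lemma caseB_identity (k : ℝ) (z : ℂ) (h0 : 0 < z.im) (R : ℝ) (hR1 : -R < z.re)
    (hR2 : z.re < R) (hT : z.im < R) :
    (∫ x in (-R)..R, Complex.exp (-Complex.I * (k : ℂ) * (x : ℂ)) / ((x : ℂ) - z))
      = 2 * (π : ℂ) * Complex.I * Complex.exp (-Complex.I * (k : ℂ) * z)
        + (∫ x in (-R)..R, Complex.exp (-Complex.I * (k : ℂ) * ((x : ℂ) + (R : ℂ) * Complex.I))
            / ((x : ℂ) + (R : ℂ) * Complex.I - z))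
        - Complex.I * (∫ y in (0:ℝ)..R,
            Complex.exp (-Complex.I * (k : ℂ) * ((R : ℂ) + (y : ℂ) * Complex.I))
            / ((R : ℂ) + (y : ℂ) * Complex.I - z))
        + Complex.I * (∫ y in (0:ℝ)..R,
            Complex.exp (-Complex.I * (k : ℂ) * (((-R : ℝ) : ℂ) + (y : ℂ) * Complex.I))
            / (((-R : ℝ) : ℂ) + (y : ℂ) * Complex.I - z)) := by
  have hE : Differentiable ℂ (fun w : ℂ => Complex.exp (-Complex.I * (k : ℂ) * w)) := by
    apply Differentiable.cexp
    exact (differentiable_const _).mul differentiable_id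
  set g : ℂ → ℂ := dslope (fun w : ℂ => Complex.exp (-Complex.I * (k : ℂ) * w)) z with hgdef
  have hgd : Differentiable ℂ g := by
    rw [← differentiableOn_univ]
    exact (Complex.differentiableOn_dslope Filter.univ_mem).mpr hE.differentiableOn
  have hgc : Continuous g := hgd.continuous
  -- Goursat for g
  have goursat := Complex.integral_boundary_rect_eq_zero_of_differentiableOn g
    (((-R : ℝ) : ℂ)) ((R : ℂ) + (R : ℂ) * Complex.I) hgd.differentiableOn
  simp only [Complex.ofReal_re, Complex.ofReal_im, Complex.add_re, Complex.add_im,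
    Complex.mul_re, Complex.mul_im, Complex.I_re, Complex.I_im, mul_zero, mul_one,
    zero_mul, sub_zero, add_zero, zero_add, zero_sub, Complex.ofReal_zero,
    smul_eq_mul] at goursat
  -- pointwise decomposition on each edge
  have hpt : ∀ w : ℂ, w ≠ z →
      Complex.exp (-Complex.I * (k : ℂ) * w) / (w - z)
        = g w + Complex.exp (-Complex.I * (k : ℂ) * z) * (w - z)⁻¹ := by
    intro w hw
    rw [hgdef, dslope_of_ne _ hw, slope_def_field]
    have hwz : w - z ≠ 0 := sub_ne_zero.mpr hw
    field_simp
    ring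
  have hb_ne : ∀ x : ℝ, (x : ℂ) ≠ z := by
    intro x h
    have := congrArg Complex.im h
    simp at this
    linarith
  have ht_ne : ∀ x : ℝ, (x : ℂ) + (R : ℂ) * Complex.I ≠ z := by
    intro x h
    have := congrArg Complex.im h
    simp at this
    linarith
  have hr_ne : ∀ y : ℝ, (R : ℂ) + (y : ℂ) * Complex.I ≠ z := by
    intro y h
    have := congrArg Complex.re h
    simp at this
    linarith
  have hl_ne : ∀ y : ℝ, ((-R : ℝ) : ℂ) + (y : ℂ) * Complex.I ≠ z := by
    intro y h
    have := congrArg Complex.re h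
    simp at this
    linarith
  -- splits
  have hsplit_b :
      (∫ x in (-R)..R, Complex.exp (-Complex.I * (k : ℂ) * (x : ℂ)) / ((x : ℂ) - z))
        = (∫ x in (-R)..R, g ((x : ℂ)))
          + Complex.exp (-Complex.I * (k : ℂ) * z)
            * ∫ x in (-R)..R, ((x : ℂ) + ((0:ℝ) : ℂ) * Complex.I - z)⁻¹ := by
    have i1 : IntervalIntegrable (fun x : ℝ => g ((x : ℂ))) volume (-R) R :=
      (hgc.comp Complex.continuous_ofReal).intervalIntegrable _ _
    have i2 : IntervalIntegrable (fun x : ℝ =>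
        Complex.exp (-Complex.I * (k : ℂ) * z) * ((x : ℂ) + ((0:ℝ) : ℂ) * Complex.I - z)⁻¹)
        volume (-R) R :=
      (continuous_const.mul (continuous_inv_horiz z 0 h0.ne)).intervalIntegrable _ _
    rw [← intervalIntegral.integral_const_mul, ← intervalIntegral.integral_add i1 i2]
    apply intervalIntegral.integral_congr
    intro x _
    have := hpt (x : ℂ) (hb_ne x)
    simpa using this
  have hsplit_t :
      (∫ x in (-R)..R, Complex.exp (-Complex.I * (k : ℂ) * ((x : ℂ) + (R : ℂ) * Complex.I))
          / ((x : ℂ) + (R : ℂ) * Complex.I - z))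
        = (∫ x in (-R)..R, g ((x : ℂ) + (R : ℂ) * Complex.I))
          + Complex.exp (-Complex.I * (k : ℂ) * z)
            * ∫ x in (-R)..R, ((x : ℂ) + (R : ℂ) * Complex.I - z)⁻¹ := by
    have i1 : IntervalIntegrable (fun x : ℝ => g ((x : ℂ) + (R : ℂ) * Complex.I)) volume (-R) R :=
      (hgc.comp (Complex.continuous_ofReal.add continuous_const)).intervalIntegrable _ _
    have i2 : IntervalIntegrable (fun x : ℝ =>
        Complex.exp (-Complex.I * (k : ℂ) * z) * ((x : ℂ) + (R : ℂ) * Complex.I - z)⁻¹)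
        volume (-R) R :=
      (continuous_const.mul (continuous_inv_horiz z R (by intro h; rw [← h] at hT; linarith))).intervalIntegrable _ _
    rw [← intervalIntegral.integral_const_mul, ← intervalIntegral.integral_add i1 i2]
    apply intervalIntegral.integral_congr
    intro x _
    exact hpt _ (ht_ne x)
  have hsplit_r :
      (∫ y in (0:ℝ)..R, Complex.exp (-Complex.I * (k : ℂ) * ((R : ℂ) + (y : ℂ) * Complex.I))
          / ((R : ℂ) + (y : ℂ) * Complex.I - z))
        = (∫ y in (0:ℝ)..R, g ((R : ℂ) + (y : ℂ) * Complex.I))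
          + Complex.exp (-Complex.I * (k : ℂ) * z)
            * ∫ y in (0:ℝ)..R, ((R : ℂ) + (y : ℂ) * Complex.I - z)⁻¹ := by
    have i1 : IntervalIntegrable (fun y : ℝ => g ((R : ℂ) + (y : ℂ) * Complex.I)) volume 0 R :=
      (hgc.comp (continuous_const.add (Complex.continuous_ofReal.mul continuous_const))).intervalIntegrable _ _
    have i2 : IntervalIntegrable (fun y : ℝ =>
        Complex.exp (-Complex.I * (k : ℂ) * z) * ((R : ℂ) + (y : ℂ) * Complex.I - z)⁻¹)
        volume 0 R :=
      (continuous_const.mul (continuous_inv_vert z R hR2.ne')).intervalIntegrable _ _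
    rw [← intervalIntegral.integral_const_mul, ← intervalIntegral.integral_add i1 i2]
    apply intervalIntegral.integral_congr
    intro y _
    exact hpt _ (hr_ne y)
  have hsplit_l :
      (∫ y in (0:ℝ)..R, Complex.exp (-Complex.I * (k : ℂ) * (((-R : ℝ) : ℂ) + (y : ℂ) * Complex.I))
          / (((-R : ℝ) : ℂ) + (y : ℂ) * Complex.I - z))
        = (∫ y in (0:ℝ)..R, g (((-R : ℝ) : ℂ) + (y : ℂ) * Complex.I))
          + Complex.exp (-Complex.I * (k : ℂ) * z)
            * ∫ y in (0:ℝ)..R, (((-R : ℝ) : ℂ) + (y : ℂ) * Complex.I - z)⁻¹ := by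
    have i1 : IntervalIntegrable (fun y : ℝ => g (((-R : ℝ) : ℂ) + (y : ℂ) * Complex.I)) volume 0 R :=
      (hgc.comp (continuous_const.add (Complex.continuous_ofReal.mul continuous_const))).intervalIntegrable _ _
    have i2 : IntervalIntegrable (fun y : ℝ =>
        Complex.exp (-Complex.I * (k : ℂ) * z) * (((-R : ℝ) : ℂ) + (y : ℂ) * Complex.I - z)⁻¹)
        volume 0 R :=
      (continuous_const.mul (continuous_inv_vert z (-R) (by linarith))).intervalIntegrable _ _
    rw [← intervalIntegral.integral_const_mul, ← intervalIntegral.integral_add i1 i2]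
    apply intervalIntegral.integral_congr
    intro y _
    exact hpt _ (hl_ne y)
  have hrect := rect_inv z h0 R R hR1 hR2 hT
  -- combine
  linear_combination hsplit_b - hsplit_t + Complex.I * hsplit_r - Complex.I * hsplit_l
    + goursat + Complex.exp (-Complex.I * (k : ℂ) * z) * hrect

end CaseB

lemma caseB (z : ℂ) (h0 : 0 < z.im) (k : ℝ) (hk : k < 0) :
    Tendsto (fun R : ℝ => ∫ x in (-R)..R, Complex.exp (-Complex.I * (k : ℂ) * (x : ℂ)) / ((x : ℂ) - z))
      atTop (nhds (2 * (π : ℂ) * Complex.I * Complex.exp (-Complex.I * (k : ℂ) * z))) := by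
  rw [tendsto_iff_norm_sub_tendsto_zero]
  have key : ∀ᶠ R : ℝ in atTop,
      ‖(∫ x in (-R)..R, Complex.exp (-Complex.I * (k : ℂ) * (x : ℂ)) / ((x : ℂ) - z))
        - 2 * (π : ℂ) * Complex.I * Complex.exp (-Complex.I * (k : ℂ) * z)‖
        ≤ 4 * Real.exp (k * R) + (2 / (-k * R) + 2 / (-k * R)) := by
    filter_upwards [eventually_ge_atTop (2 * |z.re| + 2), eventually_ge_atTop (2 * z.im + 2)]
      with R hA hB
    have habs : 0 ≤ |z.re| := abs_nonneg _
    have hRpos : 0 < R := by linarith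
    have hrelt : |z.re| < R := by linarith
    have hR1 : -R < z.re := by cases abs_lt.mp hrelt; linarith
    have hR2 : z.re < R := (abs_lt.mp hrelt).2
    have hT : z.im < R := by linarith
    have hknpos : (0:ℝ) < -k := neg_pos.mpr hk
    have hkne : k ≠ 0 := hk.ne
    rw [caseB_identity k z h0 R hR1 hR2 hT]
    have hrw : 2 * (π : ℂ) * Complex.I * Complex.exp (-Complex.I * (k : ℂ) * z)
        + (∫ x in (-R)..R, Complex.exp (-Complex.I * (k : ℂ) * ((x : ℂ) + (R : ℂ) * Complex.I))
            / ((x : ℂ) + (R : ℂ) * Complex.I - z))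
        - Complex.I * (∫ y in (0:ℝ)..R,
            Complex.exp (-Complex.I * (k : ℂ) * ((R : ℂ) + (y : ℂ) * Complex.I))
            / ((R : ℂ) + (y : ℂ) * Complex.I - z))
        + Complex.I * (∫ y in (0:ℝ)..R,
            Complex.exp (-Complex.I * (k : ℂ) * (((-R : ℝ) : ℂ) + (y : ℂ) * Complex.I))
            / (((-R : ℝ) : ℂ) + (y : ℂ) * Complex.I - z))
        - 2 * (π : ℂ) * Complex.I * Complex.exp (-Complex.I * (k : ℂ) * z)
      = (∫ x in (-R)..R, Complex.exp (-Complex.I * (k : ℂ) * ((x : ℂ) + (R : ℂ) * Complex.I))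
            / ((x : ℂ) + (R : ℂ) * Complex.I - z))
        + (- (Complex.I * (∫ y in (0:ℝ)..R,
            Complex.exp (-Complex.I * (k : ℂ) * ((R : ℂ) + (y : ℂ) * Complex.I))
            / ((R : ℂ) + (y : ℂ) * Complex.I - z))))
        + Complex.I * (∫ y in (0:ℝ)..R,
            Complex.exp (-Complex.I * (k : ℂ) * (((-R : ℝ) : ℂ) + (y : ℂ) * Complex.I))
            / (((-R : ℝ) : ℂ) + (y : ℂ) * Complex.I - z)) := by ring
    rw [hrw]
    refine (norm_add₃_le).trans ?_
    rw [norm_neg, norm_mul, norm_mul, Complex.norm_I, one_mul, one_mul]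
    have hexpint : ∫ y in (0:ℝ)..R, Real.exp (k * y) ≤ 1 / (-k) := by
      rw [integral_exp_mul k 0 R hk.ne]
      have h1 : (0:ℝ) < Real.exp (k * R) := Real.exp_pos _
      have h2 : Real.exp (k * R) ≤ 1 := Real.exp_le_one_iff.mpr
        (mul_nonpos_of_nonpos_of_nonneg hk.le hRpos.le)
      have h3 : 1 / (-k) - (Real.exp (k * R) - Real.exp (k * 0)) / k = Real.exp (k * R) / (-k) := by
        rw [mul_zero, Real.exp_zero]
        field_simp
        ring
      have h4 : 0 ≤ Real.exp (k * R) / (-k) := by positivity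
      linarith
    have hexpnn : 0 ≤ ∫ y in (0:ℝ)..R, Real.exp (k * y) :=
      intervalIntegral.integral_nonneg hRpos.le (fun u _ => (Real.exp_pos _).le)
    -- top bound
    have htop : ‖∫ x in (-R)..R, Complex.exp (-Complex.I * (k : ℂ) * ((x : ℂ) + (R : ℂ) * Complex.I))
            / ((x : ℂ) + (R : ℂ) * Complex.I - z)‖ ≤ 4 * Real.exp (k * R) := by
      have hb := horiz_edge_bound z k R (-R) R (R/2) (by positivity) ?_
      · refine hb.trans ?_
        have : |R - -R| = 2 * R := by rw [abs_of_pos (by linarith)]; ring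
        rw [this]
        rw [div_mul_eq_mul_div, div_le_iff₀ (by linarith : (0:ℝ) < R/2)]
        ring_nf
        nlinarith [Real.exp_pos (k*R)]
      · intro x _
        have him : ((x : ℂ) + (R : ℂ) * Complex.I - z).im = R - z.im := by simp
        calc R/2 ≤ R - z.im := by linarith
          _ ≤ |((x : ℂ) + (R : ℂ) * Complex.I - z).im| := by rw [him]; exact le_abs_self _
          _ ≤ ‖(x : ℂ) + (R : ℂ) * Complex.I - z‖ := Complex.abs_im_le_norm _
    -- side bounds
    have hside : ∀ c : ℝ, R/2 ≤ |c - z.re| →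
        ‖∫ y in (0:ℝ)..R, Complex.exp (-Complex.I * (k : ℂ) * ((c : ℂ) + (y : ℂ) * Complex.I))
            / ((c : ℂ) + (y : ℂ) * Complex.I - z)‖ ≤ 2 / (-k * R) := by
      intro c hc
      have hb := vert_edge_bound z k c 0 R (R/2) hRpos.le (by positivity) ?_
      · refine hb.trans ?_
        rw [div_le_div_iff₀ (by linarith : (0:ℝ) < R/2) (mul_pos hknpos hRpos)]
        calc (∫ y in (0:ℝ)..R, Real.exp (k * y)) * (-k * R) ≤ (1/(-k)) * (-k * R) := by
              apply mul_le_mul_of_nonneg_right hexpint (mul_pos hknpos hRpos).le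
          _ = R := by field_simp
          _ ≤ 2 * (R/2) := by linarith
      · intro y _
        have hre : ((c : ℂ) + (y : ℂ) * Complex.I - z).re = c - z.re := by simp
        calc R/2 ≤ |c - z.re| := hc
          _ = |((c : ℂ) + (y : ℂ) * Complex.I - z).re| := by rw [hre]
          _ ≤ ‖(c : ℂ) + (y : ℂ) * Complex.I - z‖ := Complex.abs_re_le_norm _
    have hr := hside R (by rw [abs_of_pos (by linarith)]; linarith [le_abs_self z.re])
    have hl := hside (-R) (by rw [abs_of_neg (by linarith), neg_sub]; linarith [neg_abs_le z.re])
    linarith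
  have lim : Tendsto (fun R : ℝ => 4 * Real.exp (k * R) + (2 / (-k * R) + 2 / (-k * R)))
      atTop (𝓝 0) := by
    have t1 : Tendsto (fun R : ℝ => Real.exp (k * R)) atTop (𝓝 0) :=
      Real.tendsto_exp_atBot.comp ((tendsto_const_mul_atBot_of_neg hk).mpr tendsto_id)
    have t2 : Tendsto (fun R : ℝ => 2 / (-k * R)) atTop (𝓝 0) := by
      have : (fun R : ℝ => 2 / (-k * R)) = fun R : ℝ => (2 * (-k)⁻¹) * R⁻¹ := by
        funext R; rw [div_eq_mul_inv, mul_inv]; ring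
      rw [this]
      simpa using tendsto_inv_atTop_zero.const_mul (2 * (-k)⁻¹)
    have := (t1.const_mul 4).add (t2.add t2)
    simpa using this
  exact squeeze_zero' (Eventually.of_forall fun R => norm_nonneg _) key lim

lemma caseA (z : ℂ) (h0 : 0 < z.im) (k : ℝ) (hk : 0 < k) :
    Tendsto (fun R : ℝ => ∫ x in (-R)..R, Complex.exp (-Complex.I * (k : ℂ) * (x : ℂ)) / ((x : ℂ) - z))
      atTop (𝓝 0) := by
  have key : ∀ᶠ R : ℝ in atTop,
      ‖∫ x in (-R)..R, Complex.exp (-Complex.I * (k : ℂ) * (x : ℂ)) / ((x : ℂ) - z)‖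
        ≤ 4 * Real.exp (k * (-R)) + (2 / (k * R) + 2 / (k * R)) := by
    filter_upwards [eventually_ge_atTop (2 * |z.re| + 2), eventually_ge_atTop (2 * z.im + 2)]
      with R hA hB
    have habs : 0 ≤ |z.re| := abs_nonneg _
    have hRpos : 0 < R := by linarith
    have hrelt : |z.re| < R := by linarith
    have hR1 : -R < z.re := (abs_lt.mp hrelt).1
    have hR2 : z.re < R := (abs_lt.mp hrelt).2
    -- Goursat on the lower rectangle
    have hne : ∀ w : ℂ, w.im ≤ 0 → w - z ≠ 0 := by
      intro w hw h
      have := congrArg Complex.im h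
      simp [Complex.sub_im] at this
      linarith
    have hd : DifferentiableOn ℂ
        (fun w : ℂ => Complex.exp (-Complex.I * (k : ℂ) * w) / (w - z))
        (Set.uIcc (-R) R ×ℂ Set.uIcc (-R) 0) := by
      intro w hw
      have hwim : w.im ≤ 0 := by
        have := (Complex.mem_reProdIm.mp hw).2
        rw [Set.uIcc_of_le (by linarith : -R ≤ (0:ℝ))] at this
        exact this.2
      apply DifferentiableAt.differentiableWithinAt
      apply DifferentiableAt.div
      · apply DifferentiableAt.cexp
        exact ((differentiable_const _).mul differentiable_id).differentiableAt
      · exact (differentiable_id.sub_const z).differentiableAt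
      · exact hne w hwim
    have goursat := Complex.integral_boundary_rect_eq_zero_of_differentiableOn
      (fun w : ℂ => Complex.exp (-Complex.I * (k : ℂ) * w) / (w - z))
      (((-R : ℝ) : ℂ) + ((-R : ℝ) : ℂ) * Complex.I) ((R : ℂ)) (by
        convert hd using 2 <;> first | rfl | simp)
    simp only [Complex.ofReal_re, Complex.ofReal_im, Complex.add_re, Complex.add_im,
      Complex.mul_re, Complex.mul_im, Complex.I_re, Complex.I_im, mul_zero, mul_one,
      zero_mul, sub_zero, add_zero, zero_add, zero_sub, Complex.ofReal_zero,
      smul_eq_mul] at goursat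
    -- from goursat: ∫ f = bottom + I r - I l
    have hiden : (∫ x in (-R)..R, Complex.exp (-Complex.I * (k : ℂ) * (x : ℂ)) / ((x : ℂ) - z))
        = (∫ x in (-R)..R, Complex.exp (-Complex.I * (k : ℂ) * ((x : ℂ) + ((-R : ℝ) : ℂ) * Complex.I))
            / ((x : ℂ) + ((-R : ℝ) : ℂ) * Complex.I - z))
          + (Complex.I * ∫ y in (-R)..(0:ℝ),
              Complex.exp (-Complex.I * (k : ℂ) * ((R : ℂ) + (y : ℂ) * Complex.I))
              / ((R : ℂ) + (y : ℂ) * Complex.I - z))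
          + (-(Complex.I * ∫ y in (-R)..(0:ℝ),
              Complex.exp (-Complex.I * (k : ℂ) * (((-R : ℝ) : ℂ) + (y : ℂ) * Complex.I))
              / (((-R : ℝ) : ℂ) + (y : ℂ) * Complex.I - z))) := by
      linear_combination -goursat
    rw [hiden]
    refine (norm_add₃_le).trans ?_
    rw [norm_neg, norm_mul, norm_mul, Complex.norm_I, one_mul, one_mul]
    have hexpint : ∫ y in (-R)..(0:ℝ), Real.exp (k * y) ≤ 1 / k := by
      rw [integral_exp_mul k (-R) 0 hk.ne']
      have h1 : (0:ℝ) < Real.exp (k * (-R)) := Real.exp_pos _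
      have h2 : (0:ℝ) ≤ Real.exp (k * (-R)) := h1.le
      rw [mul_zero, Real.exp_zero]
      rw [div_le_div_iff₀ hk hk]
      nlinarith
    -- bottom bound
    have hbot : ‖∫ x in (-R)..R, Complex.exp (-Complex.I * (k : ℂ) * ((x : ℂ) + ((-R : ℝ) : ℂ) * Complex.I))
            / ((x : ℂ) + ((-R : ℝ) : ℂ) * Complex.I - z)‖ ≤ 4 * Real.exp (k * (-R)) := by
      have hb := horiz_edge_bound z k (-R) (-R) R (R/2) (by linarith) ?_
      · refine hb.trans ?_
        have : |R - -R| = 2 * R := by rw [abs_of_pos (by linarith)]; ring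
        rw [this, div_mul_eq_mul_div, div_le_iff₀ (by linarith : (0:ℝ) < R/2)]
        nlinarith [Real.exp_pos (k*(-R))]
      · intro x _
        have him : ((x : ℂ) + ((-R : ℝ) : ℂ) * Complex.I - z).im = -R - z.im := by simp
        calc R/2 ≤ R + z.im := by linarith
          _ = |(-R - z.im)| := by rw [abs_of_neg (by linarith)]; ring
          _ = |((x : ℂ) + ((-R : ℝ) : ℂ) * Complex.I - z).im| := by rw [him]
          _ ≤ ‖(x : ℂ) + ((-R : ℝ) : ℂ) * Complex.I - z‖ := Complex.abs_im_le_norm _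
    have hside : ∀ c : ℝ, R/2 ≤ |c - z.re| →
        ‖∫ y in (-R)..(0:ℝ), Complex.exp (-Complex.I * (k : ℂ) * ((c : ℂ) + (y : ℂ) * Complex.I))
            / ((c : ℂ) + (y : ℂ) * Complex.I - z)‖ ≤ 2 / (k * R) := by
      intro c hc
      have hb := vert_edge_bound z k c (-R) 0 (R/2) (by linarith) (by linarith) ?_
      · refine hb.trans ?_
        rw [div_le_div_iff₀ (by linarith : (0:ℝ) < R/2) (mul_pos hk hRpos)]
        have hnn : 0 ≤ ∫ y in (-R)..(0:ℝ), Real.exp (k * y) :=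
          intervalIntegral.integral_nonneg (by linarith) (fun u _ => (Real.exp_pos _).le)
        calc (∫ y in (-R)..(0:ℝ), Real.exp (k * y)) * (k * R) ≤ (1/k) * (k * R) := by
              apply mul_le_mul_of_nonneg_right hexpint (mul_pos hk hRpos).le
          _ = R := by field_simp
          _ ≤ 2 * (R/2) := by linarith
      · intro y _
        have hre : ((c : ℂ) + (y : ℂ) * Complex.I - z).re = c - z.re := by simp
        calc R/2 ≤ |c - z.re| := hc
          _ = |((c : ℂ) + (y : ℂ) * Complex.I - z).re| := by rw [hre]
          _ ≤ ‖(c : ℂ) + (y : ℂ) * Complex.I - z‖ := Complex.abs_re_le_norm _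
    have hr := hside R (by rw [abs_of_pos (by linarith)]; linarith [le_abs_self z.re])
    have hl := hside (-R) (by rw [abs_of_neg (by linarith), neg_sub]; linarith [neg_abs_le z.re])
    linarith
  have lim : Tendsto (fun R : ℝ => 4 * Real.exp (k * (-R)) + (2 / (k * R) + 2 / (k * R)))
      atTop (𝓝 0) := by
    have t1 : Tendsto (fun R : ℝ => Real.exp (k * (-R))) atTop (𝓝 0) := by
      have : (fun R : ℝ => Real.exp (k * (-R))) = fun R : ℝ => Real.exp ((-k) * R) := by
        funext R; ring_nf
      rw [this]
      exact Real.tendsto_exp_atBot.comp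
        ((tendsto_const_mul_atBot_of_neg (neg_neg_iff_pos.mpr hk)).mpr tendsto_id)
    have t2 : Tendsto (fun R : ℝ => 2 / (k * R)) atTop (𝓝 0) := by
      have : (fun R : ℝ => 2 / (k * R)) = fun R : ℝ => (2 * k⁻¹) * R⁻¹ := by
        funext R; rw [div_eq_mul_inv, mul_inv]; ring
      rw [this]
      simpa using tendsto_inv_atTop_zero.const_mul (2 * k⁻¹)
    have := (t1.const_mul 4).add (t2.add t2)
    simpa using this
  have hnorm := squeeze_zero' (Eventually.of_forall fun R => norm_nonneg _) key lim
  exact tendsto_zero_iff_norm_tendsto_zero.mpr hnorm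

lemma intervalIntegral_conj (f : ℝ → ℂ) (a b : ℝ) :
    ∫ x in a..b, (starRingEnd ℂ) (f x) = (starRingEnd ℂ) (∫ x in a..b, f x) := by
  simp only [intervalIntegral]
  rw [map_sub, ← integral_conj, ← integral_conj]

/-- Principal-value Fourier integral of a simple non-real pole: for `Im z ≠ 0` and `k ≠ 0`,
the symmetric limit `lim_{R→∞} ∫_{−R}^R e^{−ikx}/(x−z) dx` exists and equals
`2πi e^{−ikz}` if `Im z > 0` and `k < 0`, equals `−2πi e^{−ikz}` if `Im z < 0` and `k > 0`,
and equals `0` otherwise. -/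
theorem fourier_simple_pole (z : ℂ) (hz : z.im ≠ 0) (k : ℝ) (hk : k ≠ 0) :
    Tendsto (fun R : ℝ => ∫ x in (-R)..R, Complex.exp (-Complex.I * (k : ℂ) * (x : ℂ)) / ((x : ℂ) - z))
      atTop
      (nhds (if 0 < z.im ∧ k < 0 then 2 * (π : ℂ) * Complex.I * Complex.exp (-Complex.I * (k : ℂ) * z)
        else if z.im < 0 ∧ 0 < k then -(2 * (π : ℂ) * Complex.I) * Complex.exp (-Complex.I * (k : ℂ) * z)
        else 0)) := by
  rcases hz.lt_or_gt with hneg | hpos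
  · -- z.im < 0 : use conjugation
    have hzpos : 0 < ((starRingEnd ℂ) z).im := by
      rw [Complex.conj_im]; linarith
    have hconj : ∀ R : ℝ,
        (∫ x in (-R)..R, Complex.exp (-Complex.I * (k : ℂ) * (x : ℂ)) / ((x : ℂ) - z))
          = (starRingEnd ℂ) (∫ x in (-R)..R,
              Complex.exp (-Complex.I * ((-k : ℝ) : ℂ) * (x : ℂ)) / ((x : ℂ) - (starRingEnd ℂ) z)) := by
      intro R
      rw [← intervalIntegral_conj]
      apply intervalIntegral.integral_congr
      intro x _
      show Complex.exp (-Complex.I * (k : ℂ) * (x : ℂ)) / ((x : ℂ) - z)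
        = (starRingEnd ℂ) (Complex.exp (-Complex.I * ((-k : ℝ) : ℂ) * (x : ℂ))
            / ((x : ℂ) - (starRingEnd ℂ) z))
      rw [map_div₀, ← Complex.exp_conj]
      congr 1
      · congr 1
        simp only [map_mul, map_neg, Complex.conj_I, Complex.conj_ofReal]
        push_cast
        ring
      · simp [map_sub, Complex.conj_ofReal]
    rcases hk.lt_or_gt with hkneg | hkpos
    · -- k < 0 : limit 0
      rw [if_neg (by rintro ⟨h, _⟩; linarith), if_neg (by rintro ⟨_, h⟩; linarith)]
      have h := caseA ((starRingEnd ℂ) z) hzpos (-k) (by linarith)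
      have h2 := (Complex.continuous_conj.tendsto 0).comp h
      rw [funext hconj]
      simpa [Function.comp_def] using h2
    · -- k > 0 : limit -(2πi) e^{-ikz}
      rw [if_neg (by rintro ⟨h, _⟩; linarith), if_pos ⟨hneg, hkpos⟩]
      have h := caseB ((starRingEnd ℂ) z) hzpos (-k) (by linarith)
      have h2 := (Complex.continuous_conj.tendsto _).comp h
      rw [funext hconj]
      have hL : (starRingEnd ℂ) (2 * (π : ℂ) * Complex.I
            * Complex.exp (-Complex.I * ((-k : ℝ) : ℂ) * ((starRingEnd ℂ) z)))
          = -(2 * (π : ℂ) * Complex.I) * Complex.exp (-Complex.I * (k : ℂ) * z) := by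
        rw [map_mul, ← Complex.exp_conj]
        simp only [map_mul, map_ofNat, Complex.conj_I, Complex.conj_ofReal, map_neg,
          Complex.conj_conj]
        push_cast
        ring_nf
      rw [← hL]
      exact h2
  · rcases hk.lt_or_gt with hkneg | hkpos
    · rw [if_pos ⟨hpos, hkneg⟩]
      exact caseB z hpos k hkneg
    · rw [if_neg (by rintro ⟨_, h⟩; linarith), if_neg (by rintro ⟨h, _⟩; linarith)]
      exact caseA z hpos k hkpos
end
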